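/- arXiv:2205.05075 — 8 statements merged into one kernel-verified Lean document; each statement's English description precedes it below -/
import Mathlib

section
/- Any connected graph H on n vertices (n ≥ 2) contains an induced subgraph with at least (1/2)·√(log₂ n) vertices which is either a complete graph, a star, or a path. -/
open SimpleGraph

/-- A graph is a star graph if there is a center adjacent to all other
vertices, and there are no other edges. -/
def IsStarGraph {α : Type*} (G : SimpleGraph α) : Prop :=
  ∃ c : α, ∀ u v : α, G.Adj u v ↔ ((u = c ∨ v = c) ∧ u ≠ v)

/-- A graph is a path graph if it is isomorphic to `SimpleGraph.pathGraph k` for some `k`. -/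
def IsPathGraph {α : Type*} (G : SimpleGraph α) : Prop :=
  ∃ k : ℕ, Nonempty (G ≃g SimpleGraph.pathGraph k)

section Aux

variable {V : Type*} {H : SimpleGraph V}

lemma aux_dist_getVert_le (u v : V) (p : H.Walk u v) (hH : H.Connected) :
    ∀ i, i ≤ p.length → H.dist u (p.getVert i) ≤ i := by
  intro i
  induction i with
  | zero => intro _; simp [Walk.getVert_zero]
  | succ i ih =>
    intro h
    have h1 : i ≤ p.length := by omega
    have hadj : H.Adj (p.getVert i) (p.getVert (i+1)) := p.adj_getVert_succ (by omega)
    calc H.dist u (p.getVert (i+1)) ≤ H.dist u (p.getVert i) + H.dist (p.getVert i) (p.getVert (i+1)) :=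
          hH.dist_triangle
      _ ≤ i + 1 := by
          have := (dist_eq_one_iff_adj (G := H)).mpr hadj
          omega

lemma aux_dist_getVert (u v : V) (p : H.Walk u v) (hH : H.Connected)
    (hp : p.length = H.dist u v) {i : ℕ} (hi : i ≤ p.length) :
    H.dist u (p.getVert i) = i := by
  have h1 : H.dist u (p.getVert i) ≤ i := aux_dist_getVert_le u v p hH i hi
  have h2 : H.dist (p.getVert i) v ≤ p.length - i := by
    have hrev := aux_dist_getVert_le v u p.reverse hH (p.length - i)
      (by rw [Walk.length_reverse]; omega)
    rw [Walk.getVert_reverse] at hrev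
    have : p.length - (p.length - i) = i := by omega
    rw [this] at hrev
    rwa [SimpleGraph.dist_comm]
  have h3 : H.dist u v ≤ H.dist u (p.getVert i) + H.dist (p.getVert i) v := hH.dist_triangle
  omega

lemma aux_exists_path_induced [DecidableEq V] (hH : H.Connected) (k : ℕ) (hk : 1 ≤ k)
    (h : ∃ u v : V, k - 1 ≤ H.dist u v) :
    ∃ S : Finset V, S.card = k ∧ IsPathGraph (H.induce (S : Set V)) := by
  obtain ⟨u, v, hd⟩ := h
  obtain ⟨p, hp⟩ := (hH u v).exists_walk_length_eq_dist
  set f : Fin k → V := fun i => p.getVert i.val with hf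
  have hlen : ∀ i : Fin k, (i : ℕ) ≤ p.length := by
    intro i; have := i.isLt; omega
  have hdist : ∀ i : Fin k, H.dist u (f i) = i := fun i =>
    aux_dist_getVert u v p hH hp (hlen i)
  have hinj : Function.Injective f := by
    intro i j hij
    have : H.dist u (f i) = H.dist u (f j) := by rw [hij]
    rw [hdist, hdist] at this
    exact Fin.ext this
  have hadj : ∀ i j : Fin k, H.Adj (f i) (f j) ↔ ((i:ℕ) + 1 = j ∨ (j:ℕ) + 1 = i) := by
    intro i j
    constructor
    · intro hA
      have h1 : H.dist u (f j) ≤ H.dist u (f i) + 1 := by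
        calc H.dist u (f j) ≤ H.dist u (f i) + H.dist (f i) (f j) := hH.dist_triangle
          _ ≤ H.dist u (f i) + 1 := by
              have := (dist_eq_one_iff_adj (G := H)).mpr hA; omega
      have h2 : H.dist u (f i) ≤ H.dist u (f j) + 1 := by
        calc H.dist u (f i) ≤ H.dist u (f j) + H.dist (f j) (f i) := hH.dist_triangle
          _ ≤ H.dist u (f j) + 1 := by
              have := (dist_eq_one_iff_adj (G := H)).mpr hA.symm; omega
      rw [hdist, hdist] at h1 h2
      have hne : (i:ℕ) ≠ j := by
        intro hij; exact H.irrefl (by rwa [show i = j from Fin.ext hij] at hA)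
      omega
    · intro hc
      rcases hc with hc | hc
      · have : (i:ℕ) < p.length := by have := hlen j; omega
        have h2 := p.adj_getVert_succ this
        simpa only [hf, hc] using h2
      · have : (j:ℕ) < p.length := by have := hlen i; omega
        have h2 := (p.adj_getVert_succ this).symm
        simpa only [hf, hc] using h2
  refine ⟨Finset.image f Finset.univ, ?_, ?_⟩
  · rw [Finset.card_image_of_injective _ hinj, Finset.card_univ, Fintype.card_fin]
  · have hrange : Set.range f = ((Finset.image f Finset.univ : Finset V) : Set V) := by
      simp
    refine ⟨k, ⟨?_⟩⟩
    refine Iso.symm ⟨(Equiv.ofInjective f hinj).trans (Equiv.setCongr hrange), ?_⟩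
    intro a b
    simp only [Equiv.trans_apply, Equiv.setCongr_apply, Equiv.ofInjective_apply,
      comap_adj, Function.Embedding.coe_subtype]
    rw [hadj, pathGraph_adj]

lemma aux_ramsey {V : Type*} [DecidableEq V] (G : SimpleGraph V) [DecidableRel G.Adj] :
    ∀ (m s t : ℕ) (A : Finset V), s + t = m → 2 ^ (s + t) ≤ A.card →
    (∃ B ⊆ A, B.card = s ∧ G.IsClique (B : Set V)) ∨
    (∃ B ⊆ A, B.card = t ∧ ∀ x ∈ B, ∀ y ∈ B, x ≠ y → ¬ G.Adj x y) := by
  intro m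
  induction m with
  | zero =>
    intro s t A hm _
    left
    exact ⟨∅, Finset.empty_subset _, by simp [show s = 0 by omega]⟩
  | succ m ih =>
    intro s t A hm hA
    rcases Nat.eq_zero_or_pos s with hs | hs
    · exact Or.inl ⟨∅, Finset.empty_subset _, by simp [hs]⟩
    rcases Nat.eq_zero_or_pos t with ht | ht
    · exact Or.inr ⟨∅, Finset.empty_subset _, by simp [ht]⟩
    have hApos : 0 < A.card := lt_of_lt_of_le (by positivity : 0 < 2 ^ (s + t)) hA
    obtain ⟨v, hv⟩ := Finset.card_pos.mp hApos
    set N := (A.erase v).filter (fun x => G.Adj v x) with hN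
    set M := (A.erase v).filter (fun x => ¬ G.Adj v x) with hM
    have hNM : N.card + M.card = A.card - 1 := by
      rw [hN, hM, Finset.card_filter_add_card_filter_not, Finset.card_erase_of_mem hv]
    have hkey : 2 ^ ((s-1) + t) ≤ N.card ∨ 2 ^ (s + (t-1)) ≤ M.card := by
      by_contra hc
      push_neg at hc
      have h1 : 2 ^ ((s-1) + t) + 2 ^ (s + (t-1)) = 2 ^ (s + t) := by
        have h3 : (s-1) + t + 1 = s + t := by omega
        have h2 : s + (t-1) + 1 = s + t := by omega
        calc 2 ^ ((s-1)+t) + 2^(s+(t-1)) = 2^((s-1)+t+1-1) + 2^(s+(t-1)+1-1) := by norm_num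
          _ = 2^(s+t-1) + 2^(s+t-1) := by rw [h3, h2]
          _ = 2^(s+t-1) * 2 := by ring
          _ = 2^(s+t-1+1) := by rw [pow_succ]
          _ = 2^(s+t) := by congr 1; omega
      omega
    rcases hkey with hbig | hbig
    · have := ih (s-1) t N (by omega) hbig
      rcases this with ⟨B, hBN, hBcard, hBcl⟩ | ⟨B, hBN, hBcard, hBind⟩
      · left
        have hvB : v ∉ B := fun hvB => (Finset.mem_erase.mp
          (Finset.mem_of_subset (Finset.filter_subset _ _) (hBN hvB))).1 rfl
        refine ⟨insert v B, ?_, ?_, ?_⟩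
        · intro x hx
          rcases Finset.mem_insert.mp hx with rfl | hx
          · exact hv
          · exact Finset.mem_of_subset (Finset.erase_subset _ _)
              (Finset.mem_of_subset (Finset.filter_subset _ _) (hBN hx))
        · rw [Finset.card_insert_of_notMem hvB, hBcard]; omega
        · rw [Finset.coe_insert]
          refine hBcl.insert ?_
          intro b hb _
          exact (Finset.mem_filter.mp (hBN hb)).2
      · right
        exact ⟨B, fun x hx => Finset.mem_of_subset (Finset.erase_subset _ _)
          (Finset.mem_of_subset (Finset.filter_subset _ _) (hBN hx)), hBcard, hBind⟩
    · have := ih s (t-1) M (by omega) hbig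
      rcases this with ⟨B, hBM, hBcard, hBcl⟩ | ⟨B, hBM, hBcard, hBind⟩
      · left
        exact ⟨B, fun x hx => Finset.mem_of_subset (Finset.erase_subset _ _)
          (Finset.mem_of_subset (Finset.filter_subset _ _) (hBM hx)), hBcard, hBcl⟩
      · right
        have hvB : v ∉ B := fun hvB => (Finset.mem_erase.mp
          (Finset.mem_of_subset (Finset.filter_subset _ _) (hBM hvB))).1 rfl
        refine ⟨insert v B, ?_, ?_, ?_⟩
        · intro x hx
          rcases Finset.mem_insert.mp hx with rfl | hx
          · exact hv
          · exact Finset.mem_of_subset (Finset.erase_subset _ _)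
              (Finset.mem_of_subset (Finset.filter_subset _ _) (hBM hx))
        · rw [Finset.card_insert_of_notMem hvB, hBcard]; omega
        · intro x hx y hy hxy hA2
          rcases Finset.mem_insert.mp hx with hx1 | hx1
          · rcases Finset.mem_insert.mp hy with hy1 | hy1
            · exact hxy (hx1.trans hy1.symm)
            · exact (Finset.mem_filter.mp (hBM hy1)).2 (hx1 ▸ hA2)
          · rcases Finset.mem_insert.mp hy with hy1 | hy1
            · exact (Finset.mem_filter.mp (hBM hx1)).2 (hy1 ▸ hA2).symm
            · exact hBind x hx1 y hy1 hxy hA2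

lemma aux_ball_bound [Fintype V] [DecidableEq V] [DecidableRel H.Adj] (hH : H.Connected)
    (v : V) (D : ℕ) (hdeg : ∀ x : V, H.degree x ≤ D) :
    ∀ r : ℕ, (Finset.univ.filter (fun w => H.dist v w ≤ r)).card ≤ (D + 1) ^ r := by
  intro r
  induction r with
  | zero =>
    have hsub : (Finset.univ.filter (fun w => H.dist v w ≤ 0)) ⊆ {v} := by
      intro w hw
      simp only [Finset.mem_filter, Nat.le_zero] at hw
      simp [((hH.dist_eq_zero_iff).mp hw.2).symm]
    calc _ ≤ ({v} : Finset V).card := Finset.card_le_card hsub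
      _ = 1 := Finset.card_singleton v
      _ = (D+1)^0 := by norm_num
  | succ r ih =>
    set B := Finset.univ.filter (fun w => H.dist v w ≤ r) with hB
    have hsub : (Finset.univ.filter (fun w => H.dist v w ≤ r + 1)) ⊆
        B.biUnion (fun x => insert x (H.neighborFinset x)) := by
      intro w hw
      simp only [Finset.mem_filter] at hw
      rcases Nat.lt_or_ge (H.dist v w) (r+1) with hlt | hge
      · refine Finset.mem_biUnion.mpr ⟨w, ?_, Finset.mem_insert_self _ _⟩
        rw [hB]; simp only [Finset.mem_filter]; exact ⟨Finset.mem_univ _, by omega⟩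
      · have heq : H.dist v w = r + 1 := by omega
        obtain ⟨p, hp⟩ := (hH v w).exists_walk_length_eq_dist
        have hlen : p.length = r + 1 := by rw [hp, heq]
        set x := p.getVert r with hx
        have hdx : H.dist v x = r := aux_dist_getVert v w p hH hp (by omega)
        have hadj : H.Adj x w := by
          have h2 := p.adj_getVert_succ (i := r) (by omega)
          rw [← hx] at h2
          have hgl : p.getVert (r+1) = w := by rw [← hlen]; exact p.getVert_length
          rwa [hgl] at h2
        refine Finset.mem_biUnion.mpr ⟨x, ?_, ?_⟩
        · rw [hB]; simp only [Finset.mem_filter]; exact ⟨Finset.mem_univ _, by omega⟩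
        · exact Finset.mem_insert.mpr (Or.inr ((H.mem_neighborFinset x w).mpr hadj))
    calc (Finset.univ.filter (fun w => H.dist v w ≤ r + 1)).card
        ≤ (B.biUnion (fun x => insert x (H.neighborFinset x))).card := Finset.card_le_card hsub
      _ ≤ ∑ x ∈ B, (insert x (H.neighborFinset x)).card := Finset.card_biUnion_le
      _ ≤ ∑ x ∈ B, (D + 1) := by
          refine Finset.sum_le_sum ?_
          intro x _
          calc (insert x (H.neighborFinset x)).card ≤ (H.neighborFinset x).card + 1 :=
                Finset.card_insert_le _ _
            _ ≤ D + 1 := by have := hdeg x; rw [H.card_neighborFinset_eq_degree] at *; omega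
      _ = B.card * (D + 1) := by rw [Finset.sum_const, smul_eq_mul]
      _ ≤ (D+1)^r * (D+1) := Nat.mul_le_mul_right _ ih
      _ = (D+1)^(r+1) := by rw [pow_succ]

lemma aux_star_induced [DecidableEq V] {v : V} {B : Finset V}
    (hB : ∀ x ∈ B, H.Adj v x) (hind : ∀ x ∈ B, ∀ y ∈ B, x ≠ y → ¬H.Adj x y) :
    IsStarGraph (H.induce ((insert v B : Finset V) : Set V)) := by
  have hvmem : v ∈ ((insert v B : Finset V) : Set V) := by simp
  refine ⟨⟨v, hvmem⟩, ?_⟩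
  rintro ⟨a, ha⟩ ⟨b, hb⟩
  simp only [Finset.coe_insert, Set.mem_insert_iff, Finset.mem_coe] at ha hb
  constructor
  · intro hadj
    have hadj' : H.Adj a b := hadj
    have hne : a ≠ b := hadj'.ne
    refine ⟨?_, by simpa [Subtype.ext_iff] using hne⟩
    rcases ha with rfl | ha
    · exact Or.inl rfl
    · rcases hb with rfl | hb
      · exact Or.inr rfl
      · exact absurd hadj' (hind a ha b hb hne)
  · rintro ⟨hc, hne⟩
    have hne' : a ≠ b := fun h => hne (Subtype.ext h)
    rcases hc with hc | hc
    · have hav : a = v := congrArg Subtype.val hc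
      subst hav
      rcases hb with hb | hb
      · exact absurd hb.symm hne'
      · exact (hB b hb : H.Adj a b)
    · have hbv : b = v := congrArg Subtype.val hc
      subst hbv
      rcases ha with ha | ha
      · exact absurd ha hne'
      · exact ((hB a ha).symm : H.Adj a b)

end Aux

/-- Any connected graph on `n ≥ 2` vertices contains an induced subgraph on at least
`(1/2)·√(log₂ n)` vertices which is a complete graph, a star, or a path. -/
theorem stmt0 (n : ℕ) (hn : 2 ≤ n) (H : SimpleGraph (Fin n)) (hH : H.Connected) :
    ∃ S : Finset (Fin n),
      (1 / 2) * Real.sqrt (Real.logb 2 n) ≤ (S.card : ℝ) ∧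
      (H.induce (S : Set (Fin n)) = ⊤ ∨
        IsStarGraph (H.induce (S : Set (Fin n))) ∨
        IsPathGraph (H.induce (S : Set (Fin n)))) := by
  letI : DecidableRel H.Adj := fun a b => Classical.dec _
  have hnpos : (0:ℝ) < (n:ℝ) := by positivity
  set L : ℝ := Real.logb 2 n with hLdef
  have hL1 : 1 ≤ L := by
    rw [hLdef]
    rw [Real.le_logb_iff_rpow_le (by norm_num) hnpos]
    rw [Real.rpow_one]
    exact_mod_cast hn
  set b : ℝ := (1/2) * Real.sqrt L with hbdef
  have hbpos : 0 < b := by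
    rw [hbdef]
    have : 0 < Real.sqrt L := Real.sqrt_pos.mpr (by linarith)
    linarith
  set k : ℕ := ⌈b⌉₊ with hkdef
  have hk1 : 1 ≤ k := Nat.one_le_iff_ne_zero.mpr (by
    rw [hkdef]
    exact Nat.ceil_pos.mpr hbpos |>.ne')
  have hbk : b ≤ (k:ℝ) := Nat.le_ceil b
  have hkb : (k:ℝ) ≤ b + 1 := le_of_lt (Nat.ceil_lt_add_one hbpos.le)
  by_cases hpath : ∃ u v : Fin n, k - 1 ≤ H.dist u v
  · obtain ⟨S, hScard, hSpath⟩ := aux_exists_path_induced hH k hk1 hpath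
    exact ⟨S, by rw [hScard]; exact hbk, Or.inr (Or.inr hSpath)⟩
  · push_neg at hpath
    -- every distance is at most k - 2, and k ≥ 3
    have hk3 : 3 ≤ k := by
      have h0 : (⟨0, by omega⟩ : Fin n) ≠ (⟨1, by omega⟩ : Fin n) := by
        intro h
        have := congrArg Fin.val h
        simp at this
      have hd1 : 1 ≤ H.dist ⟨0, by omega⟩ ⟨1, by omega⟩ := hH.pos_dist_of_ne h0
      have := hpath ⟨0, by omega⟩ ⟨1, by omega⟩
      omega
    by_cases hk3' : k = 3
    · -- every distance ≤ 1 : complete graph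
      have hcl : H.IsClique ((Finset.univ : Finset (Fin n)) : Set (Fin n)) := by
        intro x _ y _ hxy
        have h1 := hpath x y
        have h2 : 1 ≤ H.dist x y := hH.pos_dist_of_ne hxy
        have : H.dist x y = 1 := by omega
        exact (dist_eq_one_iff_adj).mp this
      have hn3 : 3 ≤ n := by
        by_contra hc
        have hn2 : n = 2 := by omega
        have hL2 : L = 1 := by rw [hLdef, hn2]; norm_num
        have hb1 : b ≤ 1 := by rw [hbdef, hL2]; norm_num
        have : k ≤ 1 := by rw [hkdef]; exact Nat.ceil_le.mpr (by norm_num [hb1])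
        omega
      refine ⟨Finset.univ, ?_, Or.inl ((SimpleGraph.isClique_iff_induce_eq H).mp hcl)⟩
      rw [Finset.card_univ, Fintype.card_fin]
      calc b ≤ (k:ℝ) := hbk
        _ = 3 := by rw [hk3']; norm_num
        _ ≤ (n:ℝ) := by exact_mod_cast hn3
    · have hk4 : 4 ≤ k := by omega
      by_cases hdeg : ∃ w : Fin n, 2 ^ (k + k) ≤ (H.neighborFinset w).card
      · obtain ⟨w, hw⟩ := hdeg
        rcases aux_ramsey H (k + k) k k (H.neighborFinset w) rfl hw with
          ⟨B, _, hBcard, hBcl⟩ | ⟨B, hBsub, hBcard, hBind⟩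
        · exact ⟨B, by rw [hBcard]; exact hbk,
            Or.inl ((SimpleGraph.isClique_iff_induce_eq H).mp hBcl)⟩
        · have hBadj : ∀ x ∈ B, H.Adj w x := fun x hx =>
            (H.mem_neighborFinset w x).mp (hBsub hx)
          have hwB : w ∉ B := fun hwB => H.irrefl (hBadj w hwB)
          refine ⟨insert w B, ?_, Or.inr (Or.inl (aux_star_induced hBadj hBind))⟩
          rw [Finset.card_insert_of_notMem hwB, hBcard]
          calc b ≤ (k:ℝ) := hbk
            _ ≤ ((k+1 : ℕ):ℝ) := by push_cast; linarith
      · push_neg at hdeg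
        exfalso
        have hdeg' : ∀ x : Fin n, H.degree x ≤ 2 ^ (k + k) - 1 := by
          intro x
          have := hdeg x
          rw [← H.card_neighborFinset_eq_degree]
          have hp : 1 ≤ 2 ^ (k+k) := Nat.one_le_two_pow
          omega
        have hball := aux_ball_bound hH ⟨0, by omega⟩ (2 ^ (k + k) - 1) hdeg' (k - 2)
        have hfull : (Finset.univ.filter (fun w => H.dist ⟨0, by omega⟩ w ≤ k - 2)) = Finset.univ := by
          apply Finset.filter_true_of_mem
          intro w _
          have := hpath ⟨0, by omega⟩ w
          omega
        rw [hfull, Finset.card_univ, Fintype.card_fin] at hball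
        have hpow : (2 ^ (k+k) - 1 + 1) ^ (k - 2) = 2 ^ ((k+k) * (k-2)) := by
          have hp : 1 ≤ 2 ^ (k+k) := Nat.one_le_two_pow
          rw [show 2 ^ (k+k) - 1 + 1 = 2 ^ (k+k) by omega, ← pow_mul]
        rw [hpow] at hball
        -- now n ≤ 2 ^ ((k+k)*(k-2)) but (k+k)*(k-2) < L
        have hcast : (n:ℝ) ≤ (2:ℝ) ^ ((((k+k) * (k-2) : ℕ)) : ℝ) := by
          rw [Real.rpow_natCast]
          exact_mod_cast hball
        have hexp : ((((k+k) * (k-2) : ℕ)) : ℝ) < L := by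
          have hc2 : ((k:ℝ) - 2) ≤ b - 1 := by linarith
          have hc2' : (0:ℝ) ≤ (k:ℝ) - 2 := by
            have : (4:ℝ) ≤ (k:ℝ) := by exact_mod_cast hk4
            linarith
          have hcastm : ((((k+k) * (k-2) : ℕ)) : ℝ) = ((k:ℝ) + k) * ((k:ℝ) - 2) := by
            push_cast [Nat.cast_sub (by omega : 2 ≤ k)]
            ring
          rw [hcastm]
          have hsq : Real.sqrt L ^ 2 = L := Real.sq_sqrt (by linarith)
          have hb2 : b ^ 2 = L / 4 := by
            rw [hbdef]
            rw [mul_pow, hsq]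
            ring
          have hmul : ((k:ℝ)) * ((k:ℝ) - 2) ≤ (b + 1) * (b - 1) := by
            apply mul_le_mul hkb hc2 hc2'
            linarith
          have : ((k:ℝ) + k) * ((k:ℝ) - 2) = 2 * ((k:ℝ) * ((k:ℝ) - 2)) := by ring
          rw [this]
          have h2 : (b+1) * (b-1) = b^2 - 1 := by ring
          nlinarith
        have hlt : (2:ℝ) ^ ((((k+k) * (k-2) : ℕ)) : ℝ) < (2:ℝ) ^ L :=
          (Real.rpow_lt_rpow_left_iff (by norm_num)).mpr hexp
        have h2L : (2:ℝ) ^ L = (n:ℝ) := by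
          rw [hLdef]
          exact Real.rpow_logb (by norm_num) (by norm_num) hnpos
        rw [h2L] at hlt
        linarith
end

section
/- Let T be a tree, S ⊆ V(T) a set of vertices such that the induced subgraph T[S] is a tree, and T' another tree with vertex set S. Then the graph with vertex set V(T) and edge set (E(T) \ E(T[S])) ∪ E(T') is again a tree. -/
open SimpleGraph

private lemma auxpi {V : Type*} (T G0 : SimpleGraph V) (S : Set V)
    (hG0 : ∀ u v : V, T.Adj u v → u ∉ S → G0.Adj u v) :
    ∀ (a b : V), T.Walk a b → b ∈ S → ∃ s, s ∈ S ∧ G0.Reachable a s := by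
  intro a b p
  induction p with
  | nil => exact fun hb => ⟨_, hb, Reachable.refl _⟩
  | @cons a c b hac p ih =>
    intro hb
    by_cases ha : a ∈ S
    · exact ⟨a, ha, Reachable.refl _⟩
    · obtain ⟨s, hs, hr⟩ := ih hb
      exact ⟨s, hs, (Adj.reachable (hG0 a c hac ha)).trans hr⟩

/-- If `T` is a tree, `S` is a set of vertices such that the induced subgraph `T[S]`
is a tree, and `T'` is another tree with vertex set `S`, then the graph with edge set
`(E(T) \ E(T[S])) ∪ E(T')` is again a tree. -/
theorem stmt3 {V : Type*} (T : SimpleGraph V) (hT : T.IsTree) (S : Set V)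
    (hTS : (T.induce S).IsTree)
    (T' : SimpleGraph V) (hT'S : ∀ u v : V, T'.Adj u v → u ∈ S ∧ v ∈ S)
    (hT' : (T'.induce S).IsTree)
    (R : SimpleGraph V)
    (hR : ∀ u v : V, R.Adj u v ↔ ((T.Adj u v ∧ ¬(u ∈ S ∧ v ∈ S)) ∨ T'.Adj u v)) :
    R.IsTree := by
  classical
  -- the graph of T-edges not internal to S
  let G0 : SimpleGraph V :=
    { Adj := fun u v => T.Adj u v ∧ ¬(u ∈ S ∧ v ∈ S)
      symm := ⟨fun u v h => ⟨h.1.symm, fun hc => h.2 ⟨hc.2, hc.1⟩⟩⟩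
      loopless := ⟨fun u h => T.loopless.irrefl u h.1⟩ }
  have hG0adj : ∀ u v : V, G0.Adj u v ↔ (T.Adj u v ∧ ¬(u ∈ S ∧ v ∈ S)) := fun _ _ => Iff.rfl
  -- walks in T between members of S whose edges are all internal to S
  have hSwalk : ∀ (s t : V), s ∈ S → t ∈ S →
      ∃ p : T.Walk s t, ∀ e ∈ p.edges, ∀ x ∈ e, x ∈ S := by
    intro s t hs ht
    obtain ⟨w⟩ := hTS.isConnected.preconnected ⟨s, hs⟩ ⟨t, ht⟩
    refine ⟨w.map (Embedding.induce S).toHom, ?_⟩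
    intro e he x hx
    change e ∈ (Walk.edges (w.map (Embedding.induce S).toHom)) at he
    rw [Walk.edges_map, List.mem_map] at he
    obtain ⟨e', -, rfl⟩ := he
    rw [Sym2.mem_map] at hx
    obtain ⟨y, -, rfl⟩ := hx
    exact y.2
  -- key: two members of S which are G0-reachable are equal
  have hkey : ∀ (s t : V), s ∈ S → t ∈ S → G0.Reachable s t → s = t := by
    rintro s t hs ht ⟨p0⟩
    have hle : G0 ≤ T := fun {a b} h => h.1
    let q1 : T.Walk s t := p0.map (Hom.ofLE hle)
    have hq1 : ∀ e ∈ q1.edges, ¬ (∀ x ∈ e, x ∈ S) := by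
      intro e he
      rw [Walk.edges_map, List.mem_map] at he
      obtain ⟨e', he', rfl⟩ := he
      have := p0.edges_subset_edgeSet he'
      induction e' with
      | _ x y =>
        simp only [Hom.ofLE_apply, Sym2.map_pair_eq]
        intro hall
        exact this.2 ⟨hall x (by simp), hall y (by simp)⟩
    obtain ⟨q2, hq2⟩ := hSwalk s t hs ht
    have hpq : (q1.toPath : T.Walk s t) = (q2.toPath : T.Walk s t) :=
      congrArg Subtype.val (hT.IsAcyclic.path_unique q1.toPath q2.toPath)
    have hnil : ∀ e ∈ (q1.toPath : T.Walk s t).edges, False := by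
      intro e he
      exact hq1 e (Walk.edges_toPath_subset q1 he)
        (hq2 e (Walk.edges_toPath_subset q2 (hpq ▸ he)))
    have hedges : (q1.toPath : T.Walk s t).edges = [] :=
      List.eq_nil_iff_forall_not_mem.mpr fun e he => hnil e he
    exact Walk.eq_of_length_eq_zero
      (by rw [← Walk.length_edges, hedges]; rfl)
  -- existence of a projection to S along G0
  have hexS : S.Nonempty := by
    have : Nonempty ↥S := hT'.isConnected.nonempty
    exact ⟨this.some, this.some.2⟩
  obtain ⟨s0, hs0⟩ := hexS
  have auxπ : ∀ (a b : V), T.Walk a b → b ∈ S → ∃ s, s ∈ S ∧ G0.Reachable a s :=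
    auxpi T G0 S (fun u v huv hu => ⟨huv, fun hc => hu hc.1⟩)
  have hexπ : ∀ x : V, ∃ s, s ∈ S ∧ G0.Reachable x s := fun x =>
    auxπ x s0 (hT.isConnected.preconnected x s0).some hs0
  let π : V → V := fun x => (hexπ x).choose
  have hπS : ∀ x, π x ∈ S := fun x => (hexπ x).choose_spec.1
  have hπr : ∀ x, G0.Reachable x (π x) := fun x => (hexπ x).choose_spec.2
  have hπfix : ∀ s, s ∈ S → π s = s := fun s hs => hkey _ _ (hπS s) hs (hπr s).symm
  have hπadj : ∀ a b, G0.Adj a b → π a = π b := by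
    intro a b h
    exact hkey _ _ (hπS a) (hπS b) ((hπr a).symm.trans ((h.reachable).trans (hπr b)))
  -- connectivity of R
  have hT'toR : ∀ a b : V, a ∈ S → b ∈ S → R.Reachable a b := by
    intro a b ha hb
    obtain ⟨w⟩ := hT'.isConnected.preconnected ⟨a, ha⟩ ⟨b, hb⟩
    let f : T'.induce S →g R :=
      ⟨Subtype.val, fun {x y} h => (hR _ _).mpr (Or.inr h)⟩
    exact ⟨w.map f⟩
  have hTtoR : ∀ a b : V, T.Adj a b → R.Reachable a b := by
    intro a b h
    by_cases hab : a ∈ S ∧ b ∈ S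
    · exact hT'toR a b hab.1 hab.2
    · exact Adj.reachable ((hR a b).mpr (Or.inl ⟨h, hab⟩))
  have hRpre : R.Preconnected := by
    intro x y
    obtain ⟨p⟩ := hT.isConnected.preconnected x y
    induction p with
    | nil => exact Reachable.refl _
    | cons hac p ih => exact (hTtoR _ _ hac).trans ih
  have hRconn : R.Connected := by
    haveI := hT.isConnected.nonempty
    exact ⟨hRpre⟩
  refine ⟨hRconn, ?_⟩
  -- acyclicity: every edge of R is a bridge
  rw [isAcyclic_iff_forall_adj_isBridge]
  intro u v huv
  rw [isBridge_iff]
  intro hreach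
  have hDadj : ∀ a b : V, (R \ fromEdgeSet {s(u, v)}).Adj a b →
      R.Adj a b ∧ s(a, b) ≠ s(u, v) := by
    intro a b h
    refine ⟨h.1, fun hc => h.2 ?_⟩
    exact ⟨hc ▸ rfl, h.1.ne⟩
  rcases (hR u v).mp huv with hcase | hcase
  · -- e is an edge of T not internal to S
    have hbr : ¬(T \ fromEdgeSet {s(u, v)}).Reachable u v :=
      ((isBridge_iff).mp (isAcyclic_iff_forall_adj_isBridge.mp hT.IsAcyclic hcase.1))
    have aux : ∀ (a b : V), (R \ fromEdgeSet {s(u, v)}).Walk a b →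
        (T \ fromEdgeSet {s(u, v)}).Reachable a b := by
      intro a b p
      induction p with
      | nil => exact Reachable.refl _
      | @cons a c b h p ih =>
        refine Reachable.trans ?_ ih
        obtain ⟨hRac, hne⟩ := hDadj _ _ h
        rcases (hR a c).mp hRac with h' | h'
        · refine Adj.reachable ⟨h'.1, ?_⟩
          rw [fromEdgeSet_adj]
          exact fun hc => hne hc.1
        · obtain ⟨ha, hc⟩ := hT'S a c h'
          obtain ⟨q, hq⟩ := hSwalk a c ha hc
          refine ⟨q.transfer _ fun e' he' => ?_⟩
          have hTe' := q.edges_subset_edgeSet he'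
          rw [edgeSet_sdiff, Set.mem_diff, edgeSet_fromEdgeSet]
          refine ⟨hTe', fun hmem => ?_⟩
          have : e' = s(u, v) := hmem.1
          subst this
          exact hcase.2 ⟨hq _ he' u (by simp), hq _ he' v (by simp)⟩
    obtain ⟨w⟩ := hreach
    exact hbr (aux u v w)
  · -- e is an edge of T'
    obtain ⟨hu, hv⟩ := hT'S u v hcase
    have hindadj : (T'.induce S).Adj ⟨u, hu⟩ ⟨v, hv⟩ := hcase
    have hbr : ¬((T'.induce S) \ fromEdgeSet {s((⟨u, hu⟩ : S), ⟨v, hv⟩)}).Reachable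
        ⟨u, hu⟩ ⟨v, hv⟩ :=
      ((isBridge_iff).mp
        (isAcyclic_iff_forall_adj_isBridge.mp hT'.IsAcyclic hindadj))
    have aux : ∀ (a b : V), (R \ fromEdgeSet {s(u, v)}).Walk a b →
        ((T'.induce S) \ fromEdgeSet {s((⟨u, hu⟩ : S), ⟨v, hv⟩)}).Reachable
          ⟨π a, hπS a⟩ ⟨π b, hπS b⟩ := by
      intro a b p
      induction p with
      | nil => exact Reachable.refl _
      | @cons a c b h p ih =>
        obtain ⟨hRac, hne⟩ := hDadj _ _ h
        rcases (hR a c).mp hRac with h' | h'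
        · have hpc : (⟨π a, hπS a⟩ : S) = ⟨π c, hπS c⟩ := Subtype.ext (hπadj a c h')
          rw [hpc]; exact ih
        · obtain ⟨ha, hc⟩ := hT'S a c h'
          have hea : (⟨π a, hπS a⟩ : S) = ⟨a, ha⟩ := Subtype.ext (hπfix a ha)
          have hec : (⟨π c, hπS c⟩ : S) = ⟨c, hc⟩ := Subtype.ext (hπfix c hc)
          have hadj : (T'.induce S).Adj ⟨a, ha⟩ ⟨c, hc⟩ := h'
          rw [hea]; rw [hec] at ih
          refine Reachable.trans (Adj.reachable ⟨hadj, ?_⟩) ih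
          rw [fromEdgeSet_adj]
          rintro ⟨hmem, -⟩
          apply hne
          have := congrArg (Sym2.map (Subtype.val : S → V)) (Set.mem_singleton_iff.mp hmem)
          simpa [Sym2.map_pair_eq] using this
    obtain ⟨w⟩ := hreach
    have hthis := aux u v w
    have h1 : (⟨π u, hπS u⟩ : S) = ⟨u, hu⟩ := Subtype.ext (hπfix u hu)
    have h2 : (⟨π v, hπS v⟩ : S) = ⟨v, hv⟩ := Subtype.ext (hπfix v hv)
    rw [h1, h2] at hthis
    exact hbr hthis
end

section
/- Let G be a connected weighted graph with distinct edge weights and let S ⊆ V(G) be such that the induced subgraph of MST(G) on S is connected. If e is an edge of MST(G) with both endpoints in S, then e is an edge of MST(G[S]), the minimum spanning tree of the induced weighted subgraph on S. -/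
open SimpleGraph

/-- Total weight of the edges of a graph. -/
noncomputable def wsum {V : Type*} [Finite V] (w : Sym2 V → ℝ) (T : SimpleGraph V) : ℝ :=
  ∑ e ∈ T.edgeSet.toFinite.toFinset, w e

/-- `T` is a minimum spanning tree of `G` with respect to the edge weights `w`. -/
def IsMST {V : Type*} [Finite V] (G : SimpleGraph V) (w : Sym2 V → ℝ)
    (T : SimpleGraph V) : Prop :=
  T ≤ G ∧ T.IsTree ∧ ∀ T' : SimpleGraph V, T' ≤ G → T'.IsTree → wsum w T ≤ wsum w T'

/-- The weights of distinct edges of `G` are distinct. -/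
def DistinctWeights {V : Type*} (G : SimpleGraph V) (w : Sym2 V → ℝ) : Prop :=
  ∀ e ∈ G.edgeSet, ∀ f ∈ G.edgeSet, w e = w f → e = f

section Aux

variable {V : Type*}

lemma acyclic_anti {G H : SimpleGraph V} (h : G ≤ H) (hH : H.IsAcyclic) : G.IsAcyclic :=
  fun _ c hc => hH (c.mapLe h) (hc.mapLe h)

lemma reach_endpoint_aux {T : SimpleGraph V} (a b : V) {z c : V} (p : T.Walk z c) :
    (T.deleteEdges {s(a,b)}).Reachable z c ∨ (T.deleteEdges {s(a,b)}).Reachable z a ∨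
      (T.deleteEdges {s(a,b)}).Reachable z b := by
  induction p with
  | nil => exact Or.inl (Reachable.refl _)
  | @cons z z' _ h p ih =>
    by_cases hs : s(z, z') = s(a, b)
    · rw [Sym2.eq_iff] at hs
      rcases hs with ⟨h1, h2⟩ | ⟨h1, h2⟩
      · exact Or.inr (Or.inl (h1 ▸ Reachable.refl z))
      · exact Or.inr (Or.inr (h1 ▸ Reachable.refl z))
    · have hadj : (T.deleteEdges {s(a,b)}).Adj z z' := by
        rw [deleteEdges_adj]; exact ⟨h, by simpa using hs⟩
      rcases ih with h' | h' | h'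
      · exact Or.inl (hadj.reachable.trans h')
      · exact Or.inr (Or.inl (hadj.reachable.trans h'))
      · exact Or.inr (Or.inr (hadj.reachable.trans h'))

lemma reach_endpoint {T : SimpleGraph V} (hT : T.Connected) (a b : V) (z : V) :
    (T.deleteEdges {s(a,b)}).Reachable z a ∨ (T.deleteEdges {s(a,b)}).Reachable z b := by
  obtain ⟨p⟩ := hT z a
  rcases reach_endpoint_aux a b p with h | h | h
  · exact Or.inl h
  · exact Or.inl h
  · exact Or.inr h

lemma exchange_isTree {T : SimpleGraph V} (hT : T.IsTree) {a b x y : V}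
    (hxy : x ≠ y)
    (hnr : ¬(T.deleteEdges {s(a,b)}).Reachable x y) :
    (T.deleteEdges {s(a,b)} ⊔ edge x y).IsTree := by
  set D := T.deleteEdges {s(a,b)} with hD
  set T' := D ⊔ edge x y with hT'
  have hDle : D ≤ T' := le_sup_left
  have hDacy : D.IsAcyclic := acyclic_anti (deleteEdges_le _) hT.IsAcyclic
  have hexy : T'.Adj x y := by
    refine (sup_adj _ _ _ _).mpr (Or.inr ?_)
    rw [edge_adj]; exact ⟨Or.inl ⟨rfl, rfl⟩, hxy⟩
  have key : ∀ z, T'.Reachable z x := by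
    have hreach := reach_endpoint hT.isConnected a b
    have hxr := hreach x
    have hyr := hreach y
    have hax : T'.Reachable a x ∧ T'.Reachable b x := by
      rcases hxr with hx | hx <;> rcases hyr with hy | hy
      · exact absurd (hx.trans hy.symm) hnr
      · exact ⟨(hx.mono hDle).symm, (hy.mono hDle).symm.trans hexy.symm.reachable⟩
      · exact ⟨(hy.mono hDle).symm.trans hexy.symm.reachable, (hx.mono hDle).symm⟩
      · exact absurd (hx.trans hy.symm) hnr
    intro z
    rcases hreach z with hz | hz
    · exact (hz.mono hDle).trans hax.1
    · exact (hz.mono hDle).trans hax.2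
  have hconn : T'.Connected := by
    rw [connected_iff]
    exact ⟨fun z₁ z₂ => (key z₁).trans (key z₂).symm, ⟨x⟩⟩
  refine ⟨hconn, ?_⟩
  intro z c hc
  by_cases hce : s(x, y) ∈ c.edges
  · have hcyc : T'.Adj x y ∧ (T' \ fromEdgeSet {s(x,y)}).Reachable x y :=
      (adj_and_reachable_delete_edges_iff_exists_cycle).mpr ⟨z, c, hc, hce⟩
    apply hnr
    refine hcyc.2.mono ?_
    intro a' b' hadj
    rw [sdiff_adj] at hadj
    obtain ⟨hadj1, hadj2⟩ := hadj
    rcases (sup_adj _ _ _ _).mp hadj1 with h | h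
    · exact h
    · exfalso
      rw [edge_adj] at h
      apply hadj2
      rw [fromEdgeSet_adj]
      refine ⟨?_, h.2⟩
      rcases h.1 with ⟨rfl, rfl⟩ | ⟨rfl, rfl⟩
      · rfl
      · exact Sym2.eq_swap
  · have hsub : ∀ e' ∈ c.edges, e' ∈ D.edgeSet := by
      intro e' he'
      have := c.edges_subset_edgeSet he'
      rw [hT', edgeSet_sup, edge_edgeSet_of_ne hxy] at this
      rcases this with h | h
      · exact h
      · exact absurd (h ▸ he') hce
    exact hDacy (c.transfer D hsub) (hc.transfer hsub)

lemma wsum_exchange [Finite V] (w : Sym2 V → ℝ) (T : SimpleGraph V) (e : Sym2 V) (x y : V)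
    (he : e ∈ T.edgeSet) (hxy : x ≠ y) (hf : s(x,y) ∉ T.edgeSet) :
    wsum w (T.deleteEdges {e} ⊔ edge x y) = wsum w T - w e + w s(x,y) := by
  classical
  have h1 : (T.deleteEdges {e} ⊔ edge x y).edgeSet.toFinite.toFinset
      = insert s(x,y) (T.edgeSet.toFinite.toFinset.erase e) := by
    ext a
    simp only [Set.Finite.mem_toFinset, Finset.mem_insert, Finset.mem_erase,
      edgeSet_sup, edgeSet_deleteEdges, edge_edgeSet_of_ne hxy,
      Set.mem_union, Set.mem_diff, Set.mem_singleton_iff]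
    tauto
  have h2 : s(x,y) ∉ T.edgeSet.toFinite.toFinset.erase e := by
    simp only [Finset.mem_erase, Set.Finite.mem_toFinset]
    exact fun h => hf h.2
  unfold wsum
  rw [h1, Finset.sum_insert h2, Finset.sum_erase_eq_sub ((Set.Finite.mem_toFinset _).mpr he)]
  ring

end Aux

/-- If `S ⊆ V(G)` is such that the induced subgraph of `MST(G)` on `S` is connected,
then every edge of `MST(G)` with both endpoints in `S` is an edge of `MST(G[S])`. -/
theorem stmt4 {V : Type*} [Finite V] (G : SimpleGraph V) (w : Sym2 V → ℝ)
    (hG : G.Connected) (hd : DistinctWeights G w)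
    (M : SimpleGraph V) (hM : IsMST G w M)
    (S : Set V) (hMS : (M.induce S).Connected) (hGS : (G.induce S).Connected)
    (M' : SimpleGraph S)
    (hM' : IsMST (G.induce S) (fun e => w (e.map Subtype.val)) M') :
    ∀ u v : S, M.Adj u v → M'.Adj u v := by
  classical
  intro u v huv
  by_contra hnadj
  have hMtree : M.IsTree := hM.2.1
  have hM'tree : M'.IsTree := hM'.2.1
  have huvne : (u : V) ≠ (v : V) := huv.ne
  have heM : s((u:V),(v:V)) ∈ M.edgeSet := huv
  have heG : s((u:V),(v:V)) ∈ G.edgeSet := hM.1 huv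
  -- the deleted edge is a bridge of M
  have hbr : ¬ (M.deleteEdges {s((u:V),(v:V))}).Reachable ↑u ↑v := by
    have h := isAcyclic_iff_forall_adj_isBridge.mp hMtree.IsAcyclic huv
    exact isBridge_iff.mp h
  -- cut
  set A : Set V := {z | (M.deleteEdges {s((u:V),(v:V))}).Reachable ↑u z} with hA
  have hAu : (u : V) ∈ A := Reachable.refl _
  have hAv : (v : V) ∉ A := hbr
  -- a path from u to v in M'
  obtain ⟨p₀⟩ := hM'tree.isConnected u v
  set q : M'.Walk u v := (p₀.toPath : M'.Walk u v) with hq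
  have hqpath : q.IsPath := p₀.toPath.2
  obtain ⟨d, hd_mem, hdx, hdy⟩ := q.exists_boundary_dart (Subtype.val ⁻¹' A) hAu hAv
  set x : S := d.fst with hx
  set y : S := d.snd with hy
  have hxyadj : M'.Adj x y := d.adj
  have hxyne : (x : V) ≠ (y : V) := fun h => hdy (show (y:V) ∈ A from h ▸ hdx)
  have hxyneS : x ≠ y := fun h => hxyne (congrArg _ h)
  have hfG : G.Adj ↑x ↑y := hM'.1 hxyadj
  -- f ≠ e
  have hfne : s((x:V),(y:V)) ≠ s((u:V),(v:V)) := by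
    intro h
    rw [Sym2.eq_iff] at h
    apply hnadj
    rcases h with ⟨h1, h2⟩ | ⟨h1, h2⟩
    · rwa [show u = x from Subtype.ext h1.symm, show v = y from Subtype.ext h2.symm]
    · rw [show u = y from Subtype.ext h2.symm, show v = x from Subtype.ext h1.symm]
      exact hxyadj.symm
  -- x and y are not reachable in M minus e
  have hnrxy : ¬ (M.deleteEdges {s((u:V),(v:V))}).Reachable ↑x ↑y := by
    intro h
    exact hdy (Reachable.trans hdx h)
  -- f is not an edge of M
  have hfnotM : s((x:V),(y:V)) ∉ M.edgeSet := by
    intro h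
    apply hnrxy
    apply Adj.reachable
    rw [deleteEdges_adj]
    exact ⟨h, by simpa using hfne⟩
  -- first exchange: in G
  have hT1tree : (M.deleteEdges {s((u:V),(v:V))} ⊔ edge ↑x ↑y).IsTree :=
    exchange_isTree hMtree hxyne hnrxy
  have hT1le : M.deleteEdges {s((u:V),(v:V))} ⊔ edge ↑x ↑y ≤ G := by
    refine sup_le ((deleteEdges_le _).trans hM.1) ?_
    intro a b hab
    rw [edge_adj] at hab
    rcases hab.1 with ⟨rfl, rfl⟩ | ⟨rfl, rfl⟩
    · exact hfG
    · exact hfG.symm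
  have hw1 := wsum_exchange w M s((u:V),(v:V)) ↑x ↑y heM hxyne hfnotM
  have hle1 := hM.2.2 _ hT1le hT1tree
  have hwef : w s((u:V),(v:V)) ≤ w s((x:V),(y:V)) := by
    rw [hw1] at hle1; linarith
  have hwlt : w s((u:V),(v:V)) < w s((x:V),(y:V))  := by
    rcases lt_or_eq_of_le hwef with h | h
    · exact h
    · exact absurd (hd _ heG _ hfG h) (Ne.symm hfne)
  -- second exchange: in G.induce S
  have hf₀ : s(x, y) ∈ M'.edgeSet := hxyadj
  have hnruv : ¬ (M'.deleteEdges {s(x,y)}).Reachable u v := by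
    rintro ⟨r⟩
    have hsub : ∀ e' ∈ (r.toPath : (M'.deleteEdges {s(x,y)}).Walk u v).edges,
        e' ∈ M'.edgeSet := by
      intro e' he'
      have h := (r.toPath : (M'.deleteEdges {s(x,y)}).Walk u v).edges_subset_edgeSet he'
      rw [edgeSet_deleteEdges] at h
      exact h.1
    have hnot : s(x, y) ∉ (r.toPath : (M'.deleteEdges {s(x,y)}).Walk u v).edges := by
      intro h
      have h2 := (r.toPath : (M'.deleteEdges {s(x,y)}).Walk u v).edges_subset_edgeSet h
      rw [edgeSet_deleteEdges] at h2
      exact h2.2 rfl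
    set r₂ := (r.toPath : (M'.deleteEdges {s(x,y)}).Walk u v).transfer M' hsub with hr₂
    have hr₂path : r₂.IsPath := (r.toPath.2).transfer hsub
    have hqeq : p₀.toPath = (⟨r₂, hr₂path⟩ : M'.Path u v) :=
      hM'tree.IsAcyclic.path_unique _ _
    have hmemq : s(x, y) ∈ q.edges := by
      have : d.edge ∈ q.edges := List.mem_map_of_mem (f := Dart.edge) hd_mem
      exact this
    rw [hq, hqeq] at hmemq
    have : s(x, y) ∈ (r.toPath : (M'.deleteEdges {s(x,y)}).Walk u v).edges := by
      rwa [show ((⟨r₂, hr₂path⟩ : M'.Path u v) : M'.Walk u v) = r₂ from rfl,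
        Walk.edges_transfer] at hmemq
    exact hnot this
  have huvneS : u ≠ v := fun h => huvne (congrArg _ h)
  have hT2tree : (M'.deleteEdges {s(x,y)} ⊔ edge u v).IsTree :=
    exchange_isTree hM'tree huvneS hnruv
  have hT2le : M'.deleteEdges {s(x,y)} ⊔ edge u v ≤ G.induce S := by
    refine sup_le ((deleteEdges_le _).trans hM'.1) ?_
    intro a b hab
    rw [edge_adj] at hab
    rcases hab.1 with ⟨rfl, rfl⟩ | ⟨rfl, rfl⟩
    · exact hM.1 huv
    · exact (hM.1 huv).symm
  have hsuv : s(u, v) ∉ M'.edgeSet := hnadj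
  have hw2 := wsum_exchange (fun e => w (e.map Subtype.val)) M' s(x,y) u v hf₀ huvneS hsuv
  have hle2 := hM'.2.2 _ hT2le hT2tree
  rw [hw2] at hle2
  simp only [Sym2.map_pair_eq] at hle2
  have hxv : (Subtype.val : S → V) x = ↑x := rfl
  rw [hxv] at hle2
  linarith
end

section
/- Let G be a connected weighted graph with distinct edge weights, all edge weights at most 1, and let H be a connected spanning subgraph of G containing MST(G). Suppose H contains a cycle. Then there exist non-adjacent (in MST(G)) vertices u, v joined by an edge in H such that, letting P be the path from u to v in MST(G) and S = V(P), the induced subgraph H[S] is exactly the cycle P together with edge uv, the edge uv is the heaviest edge of this cycle, and w(H[S]) ≤ 1 + wdiam(MST(G)). -/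
open SimpleGraph

/-- Weighted diameter of a graph: supremum of the weights of its paths. -/
noncomputable def wdiam {V : Type*} (w : Sym2 V → ℝ) (T : SimpleGraph V) : ℝ :=
  sSup {x : ℝ | ∃ (u v : V) (p : T.Walk u v), p.IsPath ∧ x = (p.edges.map w).sum}

section Aux

variable {V : Type*} {G : SimpleGraph V}

/-- Decompose a walk at an edge. -/
lemma edge_decomp : ∀ {s t : V} (p : G.Walk s t) (e : Sym2 V), e ∈ p.edges →
    ∃ (a b : V) (hab : G.Adj a b) (p₁ : G.Walk s a) (p₂ : G.Walk b t),
      p = p₁.append (SimpleGraph.Walk.cons hab p₂) ∧ e = s(a, b) := by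
  intro s t p
  induction p with
  | nil => simp
  | cons h q ih =>
    intro e he
    rw [SimpleGraph.Walk.edges_cons, List.mem_cons] at he
    rcases he with he | he
    · exact ⟨_, _, h, SimpleGraph.Walk.nil, q, by simp, he⟩
    · obtain ⟨a, b, hab, p₁, p₂, hdec, he'⟩ := ih e he
      exact ⟨a, b, hab, SimpleGraph.Walk.cons h p₁, p₂, by simp [hdec], he'⟩

/-- Given two vertices on a path, there is a subpath between them (in some order),
whose edges are among those of `p`, and which can only have full length when the two
vertices are the endpoints of `p`. -/
lemma path_sub {u v x y : V} (p : G.Walk u v) (hp : p.IsPath)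
    (hx : x ∈ p.support) (hy : y ∈ p.support) :
    ∃ (a b : V) (r : G.Walk a b), s(a, b) = s(x, y) ∧ r.IsPath ∧
      r.edges ⊆ p.edges ∧ r.length ≤ p.length ∧
      (r.length = p.length → a = u ∧ b = v) := by
  classical
  by_cases hy2 : y ∈ (p.dropUntil x hx).support
  · refine ⟨x, y, (p.dropUntil x hx).takeUntil y hy2, rfl, (hp.dropUntil hx).takeUntil hy2,
      ?_, ?_, ?_⟩
    · exact fun e he =>
        p.edges_dropUntil_subset hx ((p.dropUntil x hx).edges_takeUntil_subset hy2 he)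
    · exact le_trans (SimpleGraph.Walk.length_takeUntil_le _ hy2)
        (SimpleGraph.Walk.length_dropUntil_le p hx)
    · intro hl
      have hsplit : (p.takeUntil x hx).length + (p.dropUntil x hx).length = p.length := by
        rw [← SimpleGraph.Walk.length_append, SimpleGraph.Walk.take_spec]
      have hsplit2 : ((p.dropUntil x hx).takeUntil y hy2).length
          + ((p.dropUntil x hx).dropUntil y hy2).length = (p.dropUntil x hx).length := by
        rw [← SimpleGraph.Walk.length_append, SimpleGraph.Walk.take_spec]
      have h1 : (p.takeUntil x hx).length = 0 := by omega
      have h2 : ((p.dropUntil x hx).dropUntil y hy2).length = 0 := by omega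
      exact ⟨(SimpleGraph.Walk.eq_of_length_eq_zero h1).symm,
        SimpleGraph.Walk.eq_of_length_eq_zero h2⟩
  · have hy1 : y ∈ (p.takeUntil x hx).support := by
      have hsup : p.support = (p.takeUntil x hx).support ++ (p.dropUntil x hx).support.tail := by
        conv_lhs => rw [← SimpleGraph.Walk.take_spec p hx]
        rw [SimpleGraph.Walk.support_append]
      rw [hsup, List.mem_append] at hy
      rcases hy with hy | hy
      · exact hy
      · exact absurd (List.mem_of_mem_tail hy) hy2
    refine ⟨y, x, (p.takeUntil x hx).dropUntil y hy1, Sym2.eq_swap, (hp.takeUntil hx).dropUntil hy1,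
      ?_, ?_, ?_⟩
    · exact fun e he =>
        p.edges_takeUntil_subset hx ((p.takeUntil x hx).edges_dropUntil_subset hy1 he)
    · exact le_trans (SimpleGraph.Walk.length_dropUntil_le _ hy1)
        (SimpleGraph.Walk.length_takeUntil_le p hx)
    · intro hl
      have hsplit : (p.takeUntil x hx).length + (p.dropUntil x hx).length = p.length := by
        rw [← SimpleGraph.Walk.length_append, SimpleGraph.Walk.take_spec]
      have hsplit2 : ((p.takeUntil x hx).takeUntil y hy1).length
          + ((p.takeUntil x hx).dropUntil y hy1).length = (p.takeUntil x hx).length := by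
        rw [← SimpleGraph.Walk.length_append, SimpleGraph.Walk.take_spec]
      have h1 : ((p.takeUntil x hx).takeUntil y hy1).length = 0 := by omega
      have h2 : (p.dropUntil x hx).length = 0 := by omega
      exact ⟨(SimpleGraph.Walk.eq_of_length_eq_zero h1).symm,
        SimpleGraph.Walk.eq_of_length_eq_zero h2⟩

end Aux

/-- The exchange lemma: any edge on the tree path between the endpoints of a non-tree
edge of `G` weighs at most the non-tree edge. -/
lemma mst_exchange {V : Type*} [Finite V] (G : SimpleGraph V) (w : Sym2 V → ℝ)
    (M : SimpleGraph V) (hM : IsMST G w M) {u v : V}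
    (hGuv : G.Adj u v) (hnuv : ¬ M.Adj u v) (p : M.Walk u v) (hp : p.IsPath)
    {f : Sym2 V} (hf : f ∈ p.edges) : w f ≤ w s(u, v) := by
  classical
  obtain ⟨a, b, hab, p₁, p₂, hdec, rfl⟩ := edge_decomp p f hf
  have huvne : u ≠ v := hGuv.ne
  have habG : s(a, b) ∈ G.edgeSet := hM.1 hab
  have huvM : s(u, v) ∉ M.edgeSet := hnuv
  set T' : SimpleGraph V := M.deleteEdges {s(a, b)} ⊔ SimpleGraph.fromEdgeSet {s(u, v)} with hT'
  have hedge : T'.edgeSet = (M.edgeSet \ {s(a, b)}) ∪ {s(u, v)} := by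
    rw [hT', edgeSet_sup, edgeSet_deleteEdges, edgeSet_fromEdgeSet]
    have : ({s(u, v)} : Set (Sym2 V)) \ {e | e.IsDiag} = {s(u, v)} := by
      ext e
      simp only [Set.mem_diff, Set.mem_singleton_iff, Set.mem_setOf_eq, and_iff_left_iff_imp]
      rintro rfl
      simpa using huvne
    exact congrArg (fun t => M.edgeSet \ {s(a, b)} ∪ t) this
  have hT'G : T' ≤ G := by
    refine sup_le (le_trans (SimpleGraph.deleteEdges_le _) hM.1) ?_
    intro x y hxy
    rw [SimpleGraph.fromEdgeSet_adj] at hxy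
    obtain ⟨hxy1, -⟩ := hxy
    rw [Set.mem_singleton_iff, Sym2.eq_iff] at hxy1
    rcases hxy1 with ⟨rfl, rfl⟩ | ⟨rfl, rfl⟩
    · exact hGuv
    · exact hGuv.symm
  -- f does not lie on p₁ or p₂
  have hnd := hp.isTrail.edges_nodup
  rw [hdec, SimpleGraph.Walk.edges_append, SimpleGraph.Walk.edges_cons] at hnd
  have hf1 : s(a, b) ∉ p₁.edges := by
    intro h
    exact (List.disjoint_of_nodup_append hnd) h (by simp)
  have hf2 : s(a, b) ∉ p₂.edges := by
    have := (List.nodup_append.mp hnd).2.1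
    exact (List.nodup_cons.mp this).1
  -- walks avoiding f transfer to T'
  have hMsub : ∀ {c d : V} (q : M.Walk c d), s(a, b) ∉ q.edges → T'.Reachable c d := by
    intro c d q hq
    refine ⟨q.transfer T' ?_⟩
    intro e he
    rw [hedge]
    exact Or.inl ⟨q.edges_subset_edgeSet he, fun h => hq (h ▸ he)⟩
  have r1 : T'.Reachable u a := hMsub p₁ hf1
  have r2 : T'.Reachable b v := hMsub p₂ hf2
  have radj : T'.Adj u v := by
    refine Or.inr ?_
    rw [SimpleGraph.fromEdgeSet_adj]
    exact ⟨rfl, huvne⟩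
  have rab : T'.Reachable a b := r1.symm.trans (radj.reachable.trans r2.symm)
  have key : ∀ {x y : V}, M.Adj x y → T'.Reachable x y := by
    intro x y hxy
    by_cases hcase : s(x, y) = s(a, b)
    · rw [Sym2.eq_iff] at hcase
      rcases hcase with ⟨rfl, rfl⟩ | ⟨rfl, rfl⟩
      · exact rab
      · exact rab.symm
    · refine SimpleGraph.Adj.reachable (Or.inl ?_)
      rw [SimpleGraph.deleteEdges_adj]
      exact ⟨hxy, by simpa using hcase⟩
  have hT'conn : T'.Connected := by
    have hlift : ∀ (x y : V), M.Walk x y → T'.Reachable x y := by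
      intro x y q
      induction q with
      | nil => exact SimpleGraph.Reachable.refl _
      | cons h q ih => exact (key h).trans ih
    have : Nonempty V := hM.2.1.isConnected.nonempty
    exact SimpleGraph.Connected.mk fun x y =>
      (hM.2.1.isConnected.preconnected x y).elim fun q => hlift x y q
  have hT'ac : T'.IsAcyclic := by
    intro z c hc
    by_cases huvmem : s(u, v) ∈ c.edges
    · obtain ⟨-, hreach⟩ :=
        SimpleGraph.adj_and_reachable_delete_edges_iff_exists_cycle.mpr ⟨z, c, hc, huvmem⟩
      obtain ⟨q⟩ := hreach
      have hqe : ∀ e ∈ q.edges, e ∈ M.edgeSet ∧ e ≠ s(a, b) := by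
        intro e he
        have : e ∈ (T' \ SimpleGraph.fromEdgeSet {s(u, v)}).edgeSet := q.edges_subset_edgeSet he
        rw [edgeSet_sdiff, edgeSet_fromEdgeSet, hedge] at this
        obtain ⟨h1, h2⟩ := this
        have heuv : e ≠ s(u, v) := by
          intro h
          exact h2 ⟨by simp [h], by simpa [h] using huvne⟩
        rcases h1 with ⟨h1, h3⟩ | h1
        · exact ⟨h1, by simpa using h3⟩
        · exact absurd (by simpa using h1) heuv
      let q' := q.transfer M fun e he => (hqe e he).1
      have hq'f : s(a, b) ∉ q'.edges := by
        rw [SimpleGraph.Walk.edges_transfer]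
        intro h
        exact (hqe _ h).2 rfl
      have hup : (q'.toPath : M.Walk u v) = p := by
        have := hM.2.1.IsAcyclic.path_unique q'.toPath ⟨p, hp⟩
        exact congrArg Subtype.val this
      have : s(a, b) ∈ (q'.toPath : M.Walk u v).edges := by rw [hup]; exact hf
      exact hq'f (q'.edges_toPath_subset this)
    · have hcm : ∀ e ∈ c.edges, e ∈ M.edgeSet := by
        intro e he
        have h1 : e ∈ T'.edgeSet := c.edges_subset_edgeSet he
        rw [hedge] at h1
        rcases h1 with ⟨h1, -⟩ | h1
        · exact h1
        · exact absurd (by simpa using h1 : e = s(u, v)) (fun h => huvmem (h ▸ he))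
      exact hM.2.1.IsAcyclic (c.transfer M hcm) (hc.transfer hcm)
  have hT'tree : T'.IsTree := ⟨hT'conn, hT'ac⟩
  -- weight computation
  have hAB : T'.edgeSet.toFinite.toFinset
      = insert s(u, v) ((M.edgeSet.toFinite.toFinset).erase s(a, b)) := by
    ext e
    simp only [Set.Finite.mem_toFinset, Finset.mem_insert, Finset.mem_erase, hedge,
      Set.mem_union, Set.mem_diff, Set.mem_singleton_iff]
    tauto
  have hfmem : s(a, b) ∈ M.edgeSet.toFinite.toFinset := by
    rw [Set.Finite.mem_toFinset]; exact hab
  have huvnot : s(u, v) ∉ (M.edgeSet.toFinite.toFinset).erase s(a, b) := by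
    rw [Finset.mem_erase, Set.Finite.mem_toFinset]
    exact fun h => huvM h.2
  have hws : wsum w T' = w s(u, v) + (wsum w M - w s(a, b)) := by
    rw [wsum, hAB, Finset.sum_insert huvnot]
    have := Finset.sum_erase_add (M.edgeSet.toFinite.toFinset) w hfmem
    rw [wsum]
    linarith
  have := hM.2.2 T' hT'G hT'tree
  rw [hws] at this
  linarith

/-- If `H ⊇ MST(G)` is a connected spanning subgraph of `G` containing a cycle, then there
are vertices `u, v` not adjacent in `MST(G)` but adjacent in `H`, with the `MST`-path `P`
between them of minimal length, such that `H` induces on the vertices of `P` exactly the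
cycle `P + uv`, the edge `uv` is the heaviest edge of this cycle, and the weight of this
cycle is at most `1 + wdiam(MST(G))`. -/
theorem stmt5 {V : Type*} [Finite V] (G : SimpleGraph V) (w : Sym2 V → ℝ)
    (hG : G.Connected) (hd : DistinctWeights G w)
    (hw1 : ∀ e ∈ G.edgeSet, w e ≤ 1)
    (M H : SimpleGraph V) (hM : IsMST G w M)
    (hHG : H ≤ G) (hHc : H.Connected) (hMH : M ≤ H)
    (hcyc : ¬ H.IsAcyclic) :
    ∃ (u v : V), H.Adj u v ∧ ¬ M.Adj u v ∧
      ∃ p : M.Walk u v, p.IsPath ∧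
        (∀ (u' v' : V), H.Adj u' v' → ¬ M.Adj u' v' →
          ∀ q : M.Walk u' v', q.IsPath → p.length ≤ q.length) ∧
        (∀ e : Sym2 V, (e ∈ H.edgeSet ∧ ∀ x ∈ e, x ∈ p.support) ↔
          (e ∈ p.edges ∨ e = s(u, v))) ∧
        (∀ f ∈ p.edges, w f ≤ w s(u, v)) ∧
        w s(u, v) + (p.edges.map w).sum ≤ 1 + wdiam w M := by
  classical
  have hex : ∃ x y : V, H.Adj x y ∧ ¬ M.Adj x y := by
    by_contra hcon
    push_neg at hcon
    apply hcyc
    intro z c hc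
    have hle : H ≤ M := fun {x y} hxy => hcon x y hxy
    exact hM.2.1.IsAcyclic (c.mapLe hle) (hc.mapLe hle)
  have hSne : ∃ n : ℕ, ∃ u v : V, H.Adj u v ∧ ¬ M.Adj u v ∧
      ∃ p : M.Walk u v, p.IsPath ∧ p.length = n := by
    obtain ⟨x, y, hxy, hnxy⟩ := hex
    obtain ⟨q⟩ := hM.2.1.isConnected.preconnected x y
    exact ⟨(q.toPath : M.Walk x y).length, x, y, hxy, hnxy, q.toPath, q.toPath.2, rfl⟩
  obtain ⟨u, v, huv, hnuv, p, hp, hlen⟩ := Nat.find_spec hSne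
  have hGuv : G.Adj u v := hHG huv
  have hmin : ∀ (u' v' : V), H.Adj u' v' → ¬ M.Adj u' v' →
      ∀ q : M.Walk u' v', q.IsPath → p.length ≤ q.length := by
    intro u' v' h1 h2 q hq
    rw [hlen]
    exact Nat.find_min' hSne ⟨u', v', h1, h2, q, hq, rfl⟩
  refine ⟨u, v, huv, hnuv, p, hp, hmin, ?_, ?_, ?_⟩
  · -- the induced subgraph is exactly the cycle
    intro e
    induction e using Sym2.ind with
    | _ x y =>
      constructor
      · rintro ⟨heH, hsup⟩
        have hx : x ∈ p.support := hsup x (by simp)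
        have hy : y ∈ p.support := hsup y (by simp)
        have hHxy : H.Adj x y := heH
        obtain ⟨a, b, r, hab_eq, hr, hsub, hle, heq⟩ := path_sub p hp hx hy
        by_cases hMxy : M.Adj x y
        · left
          have hMab : M.Adj a b := by
            rw [Sym2.eq_iff] at hab_eq
            rcases hab_eq with ⟨rfl, rfl⟩ | ⟨rfl, rfl⟩
            · exact hMxy
            · exact hMxy.symm
          have hconsPath : (SimpleGraph.Walk.cons hMab SimpleGraph.Walk.nil).IsPath := by
            simp [hMab.ne]
          have hreq : r = SimpleGraph.Walk.cons hMab SimpleGraph.Walk.nil := by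
            have := hM.2.1.IsAcyclic.path_unique ⟨r, hr⟩
              ⟨SimpleGraph.Walk.cons hMab SimpleGraph.Walk.nil, hconsPath⟩
            exact congrArg Subtype.val this
          have : s(a, b) ∈ r.edges := by rw [hreq]; simp
          exact hab_eq ▸ hsub this
        · right
          have hHab : H.Adj a b := by
            rw [Sym2.eq_iff] at hab_eq
            rcases hab_eq with ⟨rfl, rfl⟩ | ⟨rfl, rfl⟩
            · exact hHxy
            · exact hHxy.symm
          have hMab : ¬ M.Adj a b := by
            intro h
            rw [Sym2.eq_iff] at hab_eq
            rcases hab_eq with ⟨rfl, rfl⟩ | ⟨rfl, rfl⟩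
            · exact hMxy h
            · exact hMxy h.symm
          obtain ⟨ha, hb⟩ := heq (le_antisymm hle (hmin a b hHab hMab r hr))
          rw [← hab_eq, ha, hb]
      · rintro (he | he)
        · refine ⟨?_, ?_⟩
          · exact SimpleGraph.edgeSet_mono hMH (p.edges_subset_edgeSet he)
          · intro z hz
            rw [Sym2.mem_iff] at hz
            rcases hz with rfl | rfl
            · exact p.fst_mem_support_of_mem_edges he
            · exact p.snd_mem_support_of_mem_edges he
        · rw [he]
          refine ⟨huv, ?_⟩
          intro z hz
          rw [Sym2.mem_iff] at hz
          rcases hz with rfl | rfl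
          · exact p.start_mem_support
          · exact p.end_mem_support
  · -- heaviest edge
    intro f hf
    exact mst_exchange G w M hM hGuv hnuv p hp hf
  · -- weight bound
    have h1 : w s(u, v) ≤ 1 := hw1 _ hGuv
    have h2 : (p.edges.map w).sum ≤ wdiam w M := by
      apply le_csSup
      · refine ⟨∑ e ∈ M.edgeSet.toFinite.toFinset, max (w e) 0, ?_⟩
        rintro x ⟨c, d, q, hq, rfl⟩
        calc (q.edges.map w).sum ≤ (q.edges.map fun e => max (w e) 0).sum :=
              List.sum_le_sum fun e _ => le_max_left _ _
          _ = ∑ e ∈ q.edges.toFinset, max (w e) 0 :=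
              (List.sum_toFinset _ hq.isTrail.edges_nodup).symm
          _ ≤ ∑ e ∈ M.edgeSet.toFinite.toFinset, max (w e) 0 := by
              refine Finset.sum_le_sum_of_subset_of_nonneg ?_ fun _ _ _ => le_max_right _ _
              intro e he
              rw [List.mem_toFinset] at he
              rw [Set.Finite.mem_toFinset]
              exact q.edges_subset_edgeSet he
      · exact ⟨u, v, p, hp, rfl⟩
    linarith
end

section
/- Let G be a connected weighted graph on n vertices with distinct edge weights all at most 1, and let H be a spanning subgraph of G that contains MST(G) as a subgraph. Then there is a sequence of at most |E(H)| − (n−1) local replacement steps, each replacing a connected induced subgraph of total weight at most 1 + wdiam(MST(G)) by its minimum spanning tree, that transforms H into MST(G). -/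
open SimpleGraph

/-- The graph `H[S]` consisting of the edges of `H` with both endpoints in `S`. -/
def restrictSet {V : Type*} (H : SimpleGraph V) (S : Set V) : SimpleGraph V where
  Adj u v := H.Adj u v ∧ u ∈ S ∧ v ∈ S
  symm := by constructor; intro u v h; exact ⟨h.1.symm, h.2.2, h.2.1⟩
  loopless := by constructor; intro u h; exact H.loopless.irrefl u h.1

/-- One local replacement step: `H[S]` is connected, and `H'` is obtained from `H` by
replacing the edges of `H[S]` by the edges of a minimum spanning tree of `G[S]`. -/
def ReplStep {V : Type*} [Finite V] (G : SimpleGraph V) (w : Sym2 V → ℝ)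
    (H H' : SimpleGraph V) (S : Set V) : Prop :=
  (H.induce S).Connected ∧
  ∃ T : SimpleGraph S, IsMST (G.induce S) (fun e => w (e.map Subtype.val)) T ∧
    ∀ a b : V, H'.Adj a b ↔
      ((H.Adj a b ∧ ¬(a ∈ S ∧ b ∈ S)) ∨
        ∃ (ha : a ∈ S) (hb : b ∈ S), T.Adj ⟨a, ha⟩ ⟨b, hb⟩)

/-! ### Auxiliary machinery -/

section Aux

variable {V : Type*}

lemma reachable_of_walk' {K K' : SimpleGraph V}
    (hadj : ∀ x y, K.Adj x y → K'.Reachable x y) :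
    ∀ {a b : V}, K.Walk a b → K'.Reachable a b := by
  intro a b p
  induction p with
  | nil => exact Reachable.refl _
  | cons h _ ih => exact (hadj _ _ h).trans ih

lemma connected_deleteEdge_of_reachable {G : SimpleGraph V} (hG : G.Connected)
    {u v : V} (hr : (G \ fromEdgeSet {s(u, v)}).Reachable u v) :
    (G \ fromEdgeSet {s(u, v)}).Connected := by
  have hne : Nonempty V := hG.nonempty
  refine ⟨fun a b => ?_⟩
  refine reachable_of_walk' (fun x y hxy => ?_) (hG.preconnected a b).some
  by_cases he : s(x, y) = s(u, v)
  · rcases Sym2.eq_iff.mp he with ⟨rfl, rfl⟩ | ⟨rfl, rfl⟩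
    · exact hr
    · exact hr.symm
  · exact Adj.reachable (by simp [hxy, he, hxy.ne])

lemma exists_spanning_tree_aux [Fintype V] :
    ∀ (n : ℕ) (G : SimpleGraph V), G.edgeSet.toFinite.toFinset.card ≤ n → G.Connected →
      ∃ T : SimpleGraph V, T ≤ G ∧ T.IsTree := by
  intro n
  induction n with
  | zero =>
    intro G hcard hG
    refine ⟨G, le_refl _, hG, fun z c hc => ?_⟩
    have h3 := hc.three_le_length
    obtain ⟨e, he⟩ : ∃ e, e ∈ c.edges := by
      cases hmm : c.edges with
      | nil => simp [← Walk.length_edges, hmm] at h3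
      | cons a l => exact ⟨a, by simp [hmm]⟩
    have : e ∈ G.edgeSet.toFinite.toFinset := by
      simp only [Set.Finite.mem_toFinset]
      exact c.edges_subset_edgeSet he
    have := Finset.card_pos.mpr ⟨e, this⟩
    omega
  | succ n ih =>
    intro G hcard hG
    obtain hac | hcyc := em G.IsAcyclic
    · exact ⟨G, le_refl _, hG, hac⟩
    simp only [IsAcyclic, not_forall, not_not] at hcyc
    obtain ⟨z, c, hc⟩ := hcyc
    obtain ⟨x, y, hadj, hmem⟩ : ∃ x y, G.Adj x y ∧ s(x, y) ∈ c.edges := by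
      cases c with
      | nil => exact absurd rfl hc.ne_nil
      | cons h p => exact ⟨_, _, h, by simp⟩
    have hnb : ¬ G.IsBridge s(x, y) := by
      rw [isBridge_iff_adj_and_forall_cycle_notMem]
      push_neg
      exact ⟨z, c, hc, hmem⟩
      exact hadj
    rw [isBridge_iff] at hnb
    push_neg at hnb
    have hr := hnb
    have hconn' := connected_deleteEdge_of_reachable hG hr
    have hsub : (G \ fromEdgeSet {s(x, y)}).edgeSet = G.edgeSet \ {s(x, y)} := by
      simp
    have hcard' : (G \ fromEdgeSet {s(x, y)}).edgeSet.toFinite.toFinset.card ≤ n := by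
      have h1 : (G \ fromEdgeSet {s(x, y)}).edgeSet.toFinite.toFinset
          ⊂ G.edgeSet.toFinite.toFinset := by
        rw [Finset.ssubset_iff_of_subset]
        · exact ⟨s(x, y), by simp [hsub, hadj]⟩
        · intro e he
          simp only [Set.Finite.mem_toFinset, hsub] at he ⊢
          exact he.1
      have := Finset.card_lt_card h1
      omega
    obtain ⟨T, hT1, hT2⟩ := ih _ hcard' hconn'
    exact ⟨T, hT1.trans (by simp), hT2⟩

lemma exists_spanning_tree [Fintype V] (G : SimpleGraph V) (hG : G.Connected) :
    ∃ T : SimpleGraph V, T ≤ G ∧ T.IsTree :=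
  exists_spanning_tree_aux _ G le_rfl hG

lemma mycard_eq [Fintype V] (G : SimpleGraph V) [Fintype G.edgeSet] :
    G.edgeSet.toFinite.toFinset.card = G.edgeFinset.card := by
  rw [Set.Finite.card_toFinset]
  simp [edgeFinset]

lemma isTree_of_connected_of_card [Fintype V] (G : SimpleGraph V) (hG : G.Connected)
    (hcard : G.edgeSet.toFinite.toFinset.card + 1 = Fintype.card V) : G.IsTree := by
  classical
  obtain ⟨T, hTG, hT⟩ := exists_spanning_tree G hG
  have hTcard := hT.card_edgeFinset
  have hsub : T.edgeSet.toFinite.toFinset ⊆ G.edgeSet.toFinite.toFinset := by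
    intro e he
    simp only [Set.Finite.mem_toFinset] at he ⊢
    exact edgeSet_mono hTG he
  have : T.edgeSet.toFinite.toFinset = G.edgeSet.toFinite.toFinset := by
    apply Finset.eq_of_subset_of_card_le hsub
    rw [mycard_eq G] at hcard
    rw [mycard_eq G, mycard_eq T]
    omega
  have : T = G := by
    apply edgeSet_injective
    have h2 := congrArg (fun (s : Finset (Sym2 V)) => (s : Set (Sym2 V))) this
    simp only [Set.Finite.coe_toFinset] at h2
    exact h2
  exact this ▸ hT

lemma card_le_of_connected [Fintype V] (G : SimpleGraph V) (hG : G.Connected) :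
    Fintype.card V - 1 ≤ G.edgeSet.toFinite.toFinset.card := by
  classical
  obtain ⟨T, hTG, hT⟩ := exists_spanning_tree G hG
  have hTcard := hT.card_edgeFinset
  have hsub : T.edgeSet.toFinite.toFinset ⊆ G.edgeSet.toFinite.toFinset := by
    intro e he
    simp only [Set.Finite.mem_toFinset] at he ⊢
    exact edgeSet_mono hTG he
  have := Finset.card_le_card hsub
  rw [mycard_eq T] at this
  omega

lemma subpath_exists {Gr : SimpleGraph V} {u v x y : V} (p : Gr.Walk u v) (hp : p.IsPath)
    (hx : x ∈ p.support) (hy : y ∈ p.support) :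
    ∃ q : Gr.Walk x y, q.IsPath ∧ q.length ≤ p.length ∧ (∀ e ∈ q.edges, e ∈ p.edges) ∧
      (∀ z ∈ q.support, z ∈ p.support) ∧
      (q.length = p.length → (x = u ∧ y = v) ∨ (x = v ∧ y = u)) := by
  classical
  have hsplit1 : (p.takeUntil x hx).length + (p.dropUntil x hx).length = p.length := by
    rw [← Walk.length_append, Walk.take_spec]
  by_cases hy' : y ∈ (p.dropUntil x hx).support
  · refine ⟨(p.dropUntil x hx).takeUntil y hy', (hp.dropUntil hx).takeUntil hy', ?_, ?_, ?_, ?_⟩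
    · have := Walk.length_takeUntil_le (p.dropUntil x hx) hy'
      omega
    · intro e he
      exact Walk.edges_dropUntil_subset p hx (Walk.edges_takeUntil_subset _ hy' he)
    · intro z hz
      exact Walk.support_dropUntil_subset p hx (Walk.support_takeUntil_subset _ hy' hz)
    · intro hlen
      left
      have hsplit2 : ((p.dropUntil x hx).takeUntil y hy').length +
          ((p.dropUntil x hx).dropUntil y hy').length = (p.dropUntil x hx).length := by
        rw [← Walk.length_append, Walk.take_spec]
      have h1 : (p.takeUntil x hx).length = 0 := by omega
      have h2 : ((p.dropUntil x hx).dropUntil y hy').length = 0 := by omega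
      exact ⟨(Walk.eq_of_length_eq_zero h1).symm, Walk.eq_of_length_eq_zero h2⟩
  · have hy'' : y ∈ (p.takeUntil x hx).support := by
      have h3 : y ∈ ((p.takeUntil x hx).append (p.dropUntil x hx)).support := by
        rw [Walk.take_spec]; exact hy
      rcases (Walk.mem_support_append_iff _ _).mp h3 with h | h
      · exact h
      · exact absurd h hy'
    refine ⟨((p.takeUntil x hx).dropUntil y hy'').reverse,
      ((hp.takeUntil hx).dropUntil hy'').reverse, ?_, ?_, ?_, ?_⟩
    · rw [Walk.length_reverse]
      have := Walk.length_takeUntil_le p hx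
      have hsplat : ((p.takeUntil x hx).takeUntil y hy'').length +
          ((p.takeUntil x hx).dropUntil y hy'').length = (p.takeUntil x hx).length := by
        rw [← Walk.length_append, Walk.take_spec]
      omega
    · intro e he
      rw [Walk.edges_reverse, List.mem_reverse] at he
      exact Walk.edges_takeUntil_subset p hx (Walk.edges_dropUntil_subset _ hy'' he)
    · intro z hz
      rw [Walk.support_reverse, List.mem_reverse] at hz
      exact Walk.support_takeUntil_subset p hx (Walk.support_dropUntil_subset _ hy'' hz)
    · intro hlen
      right
      rw [Walk.length_reverse] at hlen
      have hsplat : ((p.takeUntil x hx).takeUntil y hy'').length +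
          ((p.takeUntil x hx).dropUntil y hy'').length = (p.takeUntil x hx).length := by
        rw [← Walk.length_append, Walk.take_spec]
      have h0 := Walk.length_takeUntil_le p hx
      have h1 : ((p.takeUntil x hx).takeUntil y hy'').length = 0 := by omega
      have h2 : (p.dropUntil x hx).length = 0 := by omega
      exact ⟨Walk.eq_of_length_eq_zero h2, (Walk.eq_of_length_eq_zero h1).symm⟩

/-- A walk whose support is contained in `S` gives reachability in the induced graph. -/
lemma reachable_induce_of_walk {Gr : SimpleGraph V} {S : Set V} :
    ∀ {a b : V} (q : Gr.Walk a b) (_ : ∀ x ∈ q.support, x ∈ S) (ha : a ∈ S) (hb : b ∈ S),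
      (Gr.induce S).Reachable ⟨a, ha⟩ ⟨b, hb⟩ := by
  intro a b q
  induction q with
  | nil => intro _ ha hb; rfl
  | @cons a c b h q ih =>
    intro hsup ha hb
    have hc : c ∈ S := hsup c (by simp)
    have : (Gr.induce S).Adj ⟨a, ha⟩ ⟨c, hc⟩ := h
    exact this.reachable.trans (ih (fun x hx => hsup x (by simp [hx])) hc hb)

lemma sym2_forall_mem {a b : V} {S : Set V} : (∀ x ∈ s(a, b), x ∈ S) ↔ a ∈ S ∧ b ∈ S := by
  constructor
  · intro h
    exact ⟨h a (Sym2.mem_mk_left a b), h b (Sym2.mem_mk_right a b)⟩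
  · rintro ⟨ha, hb⟩ x hx
    rcases Sym2.mem_iff.mp hx with rfl | rfl
    exacts [ha, hb]

/-- Replace the part of `M` inside `S` by the graph `T` on `S`. -/
def swapG (M : SimpleGraph V) (S : Set V) (T : SimpleGraph S) : SimpleGraph V where
  Adj a b := (M.Adj a b ∧ ¬(a ∈ S ∧ b ∈ S)) ∨ ∃ (ha : a ∈ S) (hb : b ∈ S), T.Adj ⟨a, ha⟩ ⟨b, hb⟩
  symm := by
    constructor
    rintro a b (⟨h, hn⟩ | ⟨ha, hb, h⟩)
    · exact Or.inl ⟨h.symm, fun hc => hn ⟨hc.2, hc.1⟩⟩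
    · exact Or.inr ⟨hb, ha, h.symm⟩
  loopless := by
    constructor
    rintro a (⟨h, _⟩ | ⟨_, _, h⟩)
    · exact M.loopless.irrefl a h
    · exact T.loopless.irrefl _ h

lemma induce_swapG (M : SimpleGraph V) (S : Set V) (T : SimpleGraph S) :
    (swapG M S T).induce S = T := by
  ext ⟨a, ha⟩ ⟨b, hb⟩
  show (swapG M S T).Adj a b ↔ _
  constructor
  · rintro (⟨h, hn⟩ | ⟨ha', hb', h⟩)
    · exact absurd ⟨ha, hb⟩ hn
    · exact h
  · intro h
    exact Or.inr ⟨ha, hb, h⟩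

lemma swapG_self (M : SimpleGraph V) (S : Set V) : swapG M S (M.induce S) = M := by
  ext a b
  constructor
  · rintro (⟨h, _⟩ | ⟨ha, hb, h⟩)
    · exact h
    · exact h
  · intro h
    by_cases hab : a ∈ S ∧ b ∈ S
    · exact Or.inr ⟨hab.1, hab.2, h⟩
    · exact Or.inl ⟨h, hab⟩

lemma swapG_le {M G : SimpleGraph V} {S : Set V} {T : SimpleGraph S}
    (hMG : M ≤ G) (hT : T ≤ G.induce S) : swapG M S T ≤ G := by
  rintro a b (⟨h, _⟩ | ⟨ha, hb, h⟩)
  · exact hMG h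
  · exact hT h

lemma swapG_connected {M : SimpleGraph V} {S : Set V} {T : SimpleGraph S}
    (hM : M.Connected) (hT : T.Connected) : (swapG M S T).Connected := by
  have hne : Nonempty V := hM.nonempty
  refine ⟨fun a b => ?_⟩
  refine reachable_of_walk' (fun x y hxy => ?_) (hM.preconnected a b).some
  by_cases hab : x ∈ S ∧ y ∈ S
  · obtain ⟨hx, hy⟩ := hab
    have hr := hT.preconnected ⟨x, hx⟩ ⟨y, hy⟩
    let f : T →g swapG M S T :=
      ⟨Subtype.val, fun {p q} h => Or.inr ⟨p.2, q.2, by simpa using h⟩⟩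
    exact hr.map f
  · exact Adj.reachable (Or.inl ⟨hxy, hab⟩)

lemma induce_isAcyclic {M : SimpleGraph V} (hM : M.IsAcyclic) (S : Set V) :
    (M.induce S).IsAcyclic := by
  apply isAcyclic_of_path_unique
  intro x y p q
  have hinj : Function.Injective (SimpleGraph.Embedding.induce (G := M) S : M.induce S →g M) :=
    Subtype.val_injective
  have hp : (p.1.map _).IsPath := Walk.map_isPath_of_injective hinj p.2
  have hq : (q.1.map _).IsPath := Walk.map_isPath_of_injective hinj q.2
  have huniq := hM.path_unique ⟨p.1.map _, hp⟩ ⟨q.1.map _, hq⟩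
  have h2 : p.1.map _ = q.1.map _ := congrArg Subtype.val huniq
  apply Subtype.ext
  exact Walk.map_injective_of_injective hinj x y h2

open scoped Classical in
/-- The edges of `K.induce S` map onto the internal edges of `K`. -/
lemma image_induce_edges [Finite V] (K : SimpleGraph V) (S : Set V) :
    ((K.induce S).edgeSet.toFinite.toFinset).image (Sym2.map (Subtype.val : S → V)) =
      (K.edgeSet.toFinite.toFinset).filter (fun e => ∀ x ∈ e, x ∈ S) := by
  ext e
  simp only [Finset.mem_image, Finset.mem_filter, Set.Finite.mem_toFinset]
  constructor
  · rintro ⟨f, hf, rfl⟩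
    induction f with
    | _ a b =>
      refine ⟨hf, ?_⟩
      rw [Sym2.map_pair_eq, sym2_forall_mem]
      exact ⟨a.2, b.2⟩
  · rintro ⟨he, hin⟩
    induction e with
    | _ a b =>
      rw [sym2_forall_mem] at hin
      exact ⟨s(⟨a, hin.1⟩, ⟨b, hin.2⟩), he, by simp⟩

open scoped Classical in
lemma wsum_split [Finite V] (w : Sym2 V → ℝ) (K : SimpleGraph V) (S : Set V) :
    wsum w K = (∑ e ∈ (K.edgeSet.toFinite.toFinset).filter (fun e => ¬ ∀ x ∈ e, x ∈ S), w e)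
      + wsum (fun e => w (e.map Subtype.val)) (K.induce S) := by
  have hinj : Function.Injective (Sym2.map (Subtype.val : S → V)) :=
    Sym2.map.injective Subtype.val_injective
  have h1 : wsum (fun e => w (e.map Subtype.val)) (K.induce S)
      = ∑ e ∈ (K.edgeSet.toFinite.toFinset).filter (fun e => ∀ x ∈ e, x ∈ S), w e := by
    rw [← image_induce_edges K S, Finset.sum_image (fun a _ b _ h => hinj h)]
    rfl
  rw [h1, wsum]
  rw [← Finset.sum_filter_add_sum_filter_not (K.edgeSet.toFinite.toFinset)
    (fun e => ∀ x ∈ e, x ∈ S) w]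
  ring

open scoped Classical in
lemma card_split [Finite V] (K : SimpleGraph V) (S : Set V) :
    K.edgeSet.toFinite.toFinset.card
      = ((K.edgeSet.toFinite.toFinset).filter (fun e => ¬ ∀ x ∈ e, x ∈ S)).card
        + (K.induce S).edgeSet.toFinite.toFinset.card := by
  have hinj : Function.Injective (Sym2.map (Subtype.val : S → V)) :=
    Sym2.map.injective Subtype.val_injective
  have h1 : (K.induce S).edgeSet.toFinite.toFinset.card
      = ((K.edgeSet.toFinite.toFinset).filter (fun e => ∀ x ∈ e, x ∈ S)).card := by
    rw [← image_induce_edges K S, Finset.card_image_of_injective _ hinj]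
  rw [h1, ← Finset.card_filter_add_card_filter_not
    (s := K.edgeSet.toFinite.toFinset) (p := fun e => ∀ x ∈ e, x ∈ S)]
  ring

open scoped Classical in
lemma ext_swapG [Finite V] (M : SimpleGraph V) (S : Set V) (T : SimpleGraph S) :
    ((swapG M S T).edgeSet.toFinite.toFinset).filter (fun e => ¬ ∀ x ∈ e, x ∈ S)
      = (M.edgeSet.toFinite.toFinset).filter (fun e => ¬ ∀ x ∈ e, x ∈ S) := by
  ext e
  induction e with
  | _ a b =>
    simp only [Finset.mem_filter, Set.Finite.mem_toFinset, mem_edgeSet, sym2_forall_mem]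
    constructor
    · rintro ⟨(⟨h, _⟩ | ⟨ha, hb, h⟩), hn⟩
      · exact ⟨h, hn⟩
      · exact absurd ⟨ha, hb⟩ hn
    · rintro ⟨h, hn⟩
      exact ⟨Or.inl ⟨h, hn⟩, hn⟩

lemma induce_isMST [Fintype V] {G M : SimpleGraph V} {w : Sym2 V → ℝ}
    (hM : IsMST G w M) {S : Set V} (hconn : (M.induce S).Connected) :
    IsMST (G.induce S) (fun e => w (e.map Subtype.val)) (M.induce S) := by
  classical
  obtain ⟨hMG, hMtree, hmin⟩ := hM
  have htreeS : (M.induce S).IsTree := ⟨hconn, induce_isAcyclic hMtree.IsAcyclic S⟩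
  refine ⟨fun a b h => hMG h, htreeS, ?_⟩
  intro T' hT'G hT'tree
  have hM'G : swapG M S T' ≤ G := swapG_le hMG hT'G
  have hM'conn : (swapG M S T').Connected :=
    swapG_connected hMtree.isConnected hT'tree.isConnected
  haveI : Fintype ↥S := Fintype.ofFinite _
  haveI : Fintype (M.induce S).edgeSet := Fintype.ofFinite _
  haveI : Fintype T'.edgeSet := Fintype.ofFinite _
  haveI : Fintype M.edgeSet := Fintype.ofFinite _
  have hc1 : (M.induce S).edgeSet.toFinite.toFinset.card + 1 = Fintype.card ↥S := by
    rw [mycard_eq]; exact htreeS.card_edgeFinset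
  have hc2 : T'.edgeSet.toFinite.toFinset.card + 1 = Fintype.card ↥S := by
    rw [mycard_eq]; exact hT'tree.card_edgeFinset
  have hsplitM := card_split M S
  have hsplitM' := card_split (swapG M S T') S
  rw [ext_swapG, induce_swapG] at hsplitM'
  have hcM : M.edgeSet.toFinite.toFinset.card + 1 = Fintype.card V := by
    rw [mycard_eq]; exact hMtree.card_edgeFinset
  have hM'tree : (swapG M S T').IsTree :=
    isTree_of_connected_of_card _ hM'conn (by omega)
  have hle := hmin _ hM'G hM'tree
  have hwM := wsum_split w M S
  have hwM' := wsum_split w (swapG M S T') S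
  rw [ext_swapG, induce_swapG] at hwM'
  linarith

end Aux

section Step

variable {V : Type*}

lemma step_lemma [Fintype V] (G : SimpleGraph V) (w : Sym2 V → ℝ)
    (hw : ∀ e ∈ G.edgeSet, 0 < w e ∧ w e ≤ 1)
    (H M : SimpleGraph V) (hHG : H ≤ G) (hM : IsMST G w M) (hMH : M ≤ H) (hne : H ≠ M) :
    ∃ (S : Set V) (H' : SimpleGraph V), ReplStep G w H H' S ∧
      wsum w (restrictSet H S) ≤ 1 + wdiam w M ∧ M ≤ H' ∧ H' ≤ G ∧
      H'.edgeSet.toFinite.toFinset.card < H.edgeSet.toFinite.toFinset.card := by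
  classical
  obtain ⟨hMG, hMtree, hmin⟩ := hM
  have hex : ∃ x y, H.Adj x y ∧ ¬ M.Adj x y := by
    by_contra hc
    push_neg at hc
    exact hne (le_antisymm (fun a b h => hc a b h) hMH)
  -- choose a non-tree edge whose tree path is shortest
  set L : Set ℕ := {n | ∃ x y, (H.Adj x y ∧ ¬ M.Adj x y) ∧
    ∃ q : M.Walk x y, q.IsPath ∧ q.length = n} with hL
  have hLne : L.Nonempty := by
    obtain ⟨x, y, hxy⟩ := hex
    obtain ⟨q0⟩ := hMtree.isConnected.preconnected x y
    exact ⟨(q0.toPath : M.Walk x y).length, x, y, hxy, q0.toPath, q0.toPath.2, rfl⟩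
  obtain ⟨u, v, huv, q, hq, hqlen⟩ : ∃ x y, (H.Adj x y ∧ ¬ M.Adj x y) ∧
      ∃ q : M.Walk x y, q.IsPath ∧ q.length = sInf L := Nat.sInf_mem hLne
  have hminlen : ∀ x y, (H.Adj x y ∧ ¬ M.Adj x y) → ∀ r : M.Walk x y, r.IsPath →
      sInf L ≤ r.length := fun x y hxy r hr => Nat.sInf_le ⟨x, y, hxy, r, hr, rfl⟩
  set S : Set V := {z | z ∈ q.support} with hS
  have huS : u ∈ S := q.start_mem_support
  have hvS : v ∈ S := q.end_mem_support
  -- the M-edges inside S are exactly the edges of q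
  have hint : ∀ a b : V, (M.Adj a b ∧ a ∈ S ∧ b ∈ S) ↔ s(a, b) ∈ q.edges := by
    intro a b
    constructor
    · rintro ⟨hab, ha, hb⟩
      obtain ⟨r, hr, _, hsub, _, _⟩ := subpath_exists q hq ha hb
      have : (⟨r, hr⟩ : M.Path a b) = Path.singleton hab :=
        hMtree.IsAcyclic.path_unique _ _
      have hre : r.edges = [s(a, b)] := by
        rw [show r = (Path.singleton hab : M.Walk a b) from congrArg Subtype.val this]
        simp [Path.singleton]
      exact hsub _ (by rw [hre]; simp)
    · intro he
      exact ⟨q.adj_of_mem_edges he, q.fst_mem_support_of_mem_edges he,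
        q.snd_mem_support_of_mem_edges he⟩
  -- the H-edges inside S are exactly the edges of q together with s(u, v)
  have hHint : ∀ a b : V, (H.Adj a b ∧ a ∈ S ∧ b ∈ S) ↔
      (s(a, b) ∈ q.edges ∨ s(a, b) = s(u, v)) := by
    intro a b
    constructor
    · rintro ⟨hab, ha, hb⟩
      by_cases hMadj : M.Adj a b
      · exact Or.inl ((hint a b).mp ⟨hMadj, ha, hb⟩)
      · obtain ⟨r, hr, hlen, _, _, heq⟩ := subpath_exists q hq ha hb
        have h1 : sInf L ≤ r.length := hminlen a b ⟨hab, hMadj⟩ r hr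
        have h2 : r.length = q.length := by omega
        rcases heq h2 with ⟨rfl, rfl⟩ | ⟨rfl, rfl⟩
        · exact Or.inr rfl
        · exact Or.inr (Sym2.eq_swap)
    · rintro (he | he)
      · have := (hint a b).mpr he
        exact ⟨hMH this.1, this.2⟩
      · rcases Sym2.eq_iff.mp he with ⟨rfl, rfl⟩ | ⟨rfl, rfl⟩
        · exact ⟨huv.1, huS, hvS⟩
        · exact ⟨huv.1.symm, hvS, huS⟩
  -- connectivity of the induced graphs
  have hMSconn : (M.induce S).Connected := by
    have hnS : Nonempty ↥S := ⟨⟨u, huS⟩⟩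
    refine ⟨fun x y => ?_⟩
    obtain ⟨a, ha⟩ := x
    obtain ⟨b, hb⟩ := y
    obtain ⟨r, hr, _, _, hsup, _⟩ := subpath_exists q hq ha hb
    exact reachable_induce_of_walk r hsup ha hb
  have hHSconn : (H.induce S).Connected :=
    Connected.mono (fun a b h => hMH h) hMSconn
  have hMST := induce_isMST ⟨hMG, hMtree, hmin⟩ hMSconn
  refine ⟨S, swapG H S (M.induce S), ⟨hHSconn, M.induce S, hMST, fun a b => Iff.rfl⟩,
    ?_, ?_, ?_, ?_⟩
  · -- weight bound
    have hnotmem : s(u, v) ∉ q.edges.toFinset := by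
      intro hc
      exact huv.2 (q.adj_of_mem_edges (List.mem_toFinset.mp hc))
    have hfin : (restrictSet H S).edgeSet.toFinite.toFinset = insert s(u, v) q.edges.toFinset := by
      ext e
      induction e with
      | _ a b =>
        simp only [Set.Finite.mem_toFinset, mem_edgeSet, Finset.mem_insert, List.mem_toFinset]
        show (H.Adj a b ∧ a ∈ S ∧ b ∈ S) ↔ _
        rw [hHint a b]
        tauto
    have hsum : wsum w (restrictSet H S) = w s(u, v) + (q.edges.map w).sum := by
      rw [wsum, hfin, Finset.sum_insert hnotmem, List.sum_toFinset w hq.edges_nodup]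
    have hbdd : BddAbove {x : ℝ | ∃ (a b : V) (p : M.Walk a b), p.IsPath ∧
        x = (p.edges.map w).sum} := by
      refine ⟨(Fintype.card V : ℝ), ?_⟩
      rintro x ⟨a, b, p, hp, rfl⟩
      have h1 : ∀ y ∈ p.edges.map w, y ≤ 1 := by
        rintro y hy
        obtain ⟨e, he, rfl⟩ := List.mem_map.mp hy
        exact (hw e (edgeSet_mono hMG (p.edges_subset_edgeSet he))).2
      have h2 := List.sum_le_card_nsmul _ 1 h1
      have h3 : (p.edges.map w).length = p.length := by simp
      have h4 : p.length < Fintype.card V := hp.length_lt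
      rw [h3] at h2
      have : (p.length : ℝ) • (1 : ℝ) = (p.length : ℝ) := by simp
      calc (p.edges.map w).sum ≤ p.length • (1 : ℝ) := h2
        _ = (p.length : ℝ) := by simp
        _ ≤ (Fintype.card V : ℝ) := by exact_mod_cast h4.le
    have hle2 : (q.edges.map w).sum ≤ wdiam w M := le_csSup hbdd ⟨u, v, q, hq, rfl⟩
    have hle1 : w s(u, v) ≤ 1 := (hw s(u, v) (hHG huv.1)).2
    rw [hsum]
    linarith
  · -- M ≤ H'
    intro a b h
    by_cases hab : a ∈ S ∧ b ∈ S
    · exact Or.inr ⟨hab.1, hab.2, h⟩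
    · exact Or.inl ⟨hMH h, hab⟩
  · -- H' ≤ G
    refine swapG_le hHG (fun a b h => hMG h)
  · -- strictly fewer edges
    have hsub : (swapG H S (M.induce S)).edgeSet.toFinite.toFinset
        ⊆ H.edgeSet.toFinite.toFinset := by
      intro e he
      simp only [Set.Finite.mem_toFinset] at he ⊢
      refine edgeSet_mono ?_ he
      rintro a b (⟨h, _⟩ | ⟨ha, hb, h⟩)
      · exact h
      · exact hMH h
    refine Finset.card_lt_card ⟨hsub, fun hc => ?_⟩
    have hmem : s(u, v) ∈ H.edgeSet.toFinite.toFinset := by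
      simp only [Set.Finite.mem_toFinset, mem_edgeSet]
      exact huv.1
    have := hc hmem
    simp only [Set.Finite.mem_toFinset, mem_edgeSet] at this
    rcases this with ⟨_, hn⟩ | ⟨_, _, h⟩
    · exact hn ⟨huS, hvS⟩
    · exact huv.2 h

end Step

/-- If `H` is a spanning subgraph of `G` containing `MST(G)`, then at most
`|E(H)| − (n−1)` local replacement steps, each of weight at most `1 + wdiam(MST(G))`,
transform `H` into `MST(G)`. -/
theorem stmt6 {V : Type*} [Fintype V] (G : SimpleGraph V) (w : Sym2 V → ℝ)
    (hG : G.Connected) (hd : DistinctWeights G w)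
    (hw : ∀ e ∈ G.edgeSet, 0 < w e ∧ w e ≤ 1)
    (H M : SimpleGraph V) (hHG : H ≤ G) (hM : IsMST G w M) (hMH : M ≤ H) :
    ∃ m : ℕ, m ≤ H.edgeSet.toFinite.toFinset.card - (Fintype.card V - 1) ∧
      ∃ (Hs : ℕ → SimpleGraph V) (Ss : ℕ → Set V),
        Hs 0 = H ∧ Hs m = M ∧
        ∀ i < m, ReplStep G w (Hs i) (Hs (i + 1)) (Ss i) ∧
          wsum w (restrictSet (Hs i) (Ss i)) ≤ 1 + wdiam w M := by
  classical
  suffices h : ∀ (N : ℕ) (H : SimpleGraph V), H.edgeSet.toFinite.toFinset.card ≤ N →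
      H ≤ G → M ≤ H →
      ∃ m : ℕ, m ≤ H.edgeSet.toFinite.toFinset.card - (Fintype.card V - 1) ∧
      ∃ (Hs : ℕ → SimpleGraph V) (Ss : ℕ → Set V),
        Hs 0 = H ∧ Hs m = M ∧
        ∀ i < m, ReplStep G w (Hs i) (Hs (i + 1)) (Ss i) ∧
          wsum w (restrictSet (Hs i) (Ss i)) ≤ 1 + wdiam w M by
    exact h _ H le_rfl hHG hMH
  intro N
  induction N with
  | zero =>
    intro H hcard hHG' hMH'
    by_cases hHM : H = M
    · refine ⟨0, Nat.zero_le _, fun _ => H, fun _ => ∅, rfl, hHM, fun i hi => absurd hi (by omega)⟩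
    · obtain ⟨S, H', _, _, _, _, hlt⟩ := step_lemma G w hw H M hHG' hM hMH' hHM
      omega
  | succ N ih =>
    intro H hcard hHG' hMH'
    by_cases hHM : H = M
    · refine ⟨0, Nat.zero_le _, fun _ => H, fun _ => ∅, rfl, hHM, fun i hi => absurd hi (by omega)⟩
    · obtain ⟨S, H', hstep, hwt, hMH'', hH'G, hlt⟩ := step_lemma G w hw H M hHG' hM hMH' hHM
      obtain ⟨m', hm', Hs', Ss', hHs'0, hHs'm, hprops⟩ :=
        ih H' (by omega) hH'G hMH''
      have hH'conn : H'.Connected := Connected.mono hMH'' hM.2.1.isConnected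
      have hH'ge : Fintype.card V - 1 ≤ H'.edgeSet.toFinite.toFinset.card :=
        card_le_of_connected H' hH'conn
      refine ⟨m' + 1, by omega,
        (fun i => if i = 0 then H else Hs' (i - 1)),
        (fun i => if i = 0 then S else Ss' (i - 1)), by simp, ?_, ?_⟩
      · simp only [Nat.succ_ne_zero, if_neg, Nat.add_sub_cancel]
        exact hHs'm
      · intro i hi
        rcases Nat.eq_zero_or_pos i with rfl | hpos
        · simp only [if_pos, Nat.one_ne_zero, if_neg, Nat.sub_self]
          constructor
          · simpa [hHs'0] using hstep
          · simpa using hwt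
        · obtain ⟨j, rfl⟩ := Nat.exists_eq_add_of_le hpos
          have hj : j < m' := by omega
          have h1 : 1 + j ≠ 0 := by omega
          have h2 : 1 + j + 1 ≠ 0 := by omega
          simp only [if_neg h1, if_neg h2]
          have e1 : 1 + j - 1 = j := by omega
          have e2 : 1 + j + 1 - 1 = j + 1 := by omega
          rw [e1, e2]
          exact hprops j hj
end

section
/- Let G be a weighted graph on vertex set V, let T be a subtree of G, and let G* have the same underlying graph with weights w* satisfying w*(e) ≤ w(e) for e ∈ E(T) and w*(e) = w(e) otherwise. Assume all weights of G and of G* are distinct. Then the edge set of MST(G*) is contained in E(MST(G)) ∪ E(T). -/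
open SimpleGraph

namespace MSTaux

variable {V : Type*}

lemma reach_or_aux {M : SimpleGraph V} (u0 v0 : V) {v w : V} (p : M.Walk v w) :
    (M.deleteEdges {s(u0, v0)}).Reachable v w ∨
      (M.deleteEdges {s(u0, v0)}).Reachable v u0 ∨
      (M.deleteEdges {s(u0, v0)}).Reachable v v0 := by
  induction p with
  | nil => exact Or.inl (Reachable.refl _)
  | @cons a b c h q ih =>
    by_cases hc : s(a, b) = s(u0, v0)
    · rw [Sym2.eq_iff] at hc
      rcases hc with ⟨rfl, rfl⟩ | ⟨rfl, rfl⟩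
      · exact Or.inr (Or.inl (Reachable.refl _))
      · exact Or.inr (Or.inr (Reachable.refl _))
    · have hadj : (M.deleteEdges {s(u0, v0)}).Adj a b := by
        rw [SimpleGraph.deleteEdges_adj]
        exact ⟨h, by simpa using hc⟩
      exact ih.imp hadj.reachable.trans
        (fun h2 => h2.imp hadj.reachable.trans hadj.reachable.trans)

lemma reach_or {M : SimpleGraph V} {u0 v0 : V} {v : V} (p : M.Walk v u0) :
    (M.deleteEdges {s(u0, v0)}).Reachable v u0 ∨ (M.deleteEdges {s(u0, v0)}).Reachable v v0 := by
  rcases reach_or_aux u0 v0 p with h | h | h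
  · exact Or.inl h
  · exact Or.inl h
  · exact Or.inr h

lemma not_reach_del {M : SimpleGraph V} (hA : M.IsAcyclic) {a b : V} {p : M.Walk a b}
    (hp : p.IsPath) {f : Sym2 V} (hf : f ∈ p.edges) :
    ¬ (M.deleteEdges {f}).Reachable a b := by
  classical
  rintro ⟨q⟩
  have hsub : ∀ e ∈ q.edges, e ∈ M.edgeSet := by
    intro e he
    have := q.edges_subset_edgeSet he
    rw [SimpleGraph.edgeSet_deleteEdges] at this
    exact this.1
  set q' := q.transfer M hsub with hq'
  have hpq : (⟨p, hp⟩ : M.Path a b) = ⟨q'.bypass, q'.bypass_isPath⟩ :=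
    hA.path_unique _ _
  have h1 : p = q'.bypass := congrArg Subtype.val hpq
  have h2 : f ∈ q'.edges := q'.edges_bypass_subset (h1 ▸ hf)
  rw [hq', SimpleGraph.Walk.edges_transfer] at h2
  have := q.edges_subset_edgeSet h2
  rw [SimpleGraph.edgeSet_deleteEdges] at this
  exact this.2 rfl

lemma swap_isTree {M : SimpleGraph V} (hM : M.IsTree) {u0 v0 x y : V}
    (hdel : M.Adj u0 v0) (hxy : x ≠ y) (hnotin : s(x, y) ∉ M.edgeSet)
    (hsep : ¬ (M.deleteEdges {s(u0, v0)}).Reachable x y) :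
    ((M.deleteEdges {s(u0, v0)}) ⊔ SimpleGraph.fromEdgeSet {s(x, y)}).IsTree := by
  set D := M.deleteEdges {s(u0, v0)} with hD
  set N := D ⊔ SimpleGraph.fromEdgeSet {s(x, y)} with hN
  have hDN : D ≤ N := le_sup_left
  have hadjN : N.Adj x y := by
    rw [hN, SimpleGraph.sup_adj]
    exact Or.inr (by rw [SimpleGraph.fromEdgeSet_adj]; exact ⟨rfl, hxy⟩)
  have hall : ∀ v, D.Reachable v u0 ∨ D.Reachable v v0 := fun v =>
    reach_or ((hM.isConnected.preconnected v u0).some)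
  have hbridge : ¬ D.Reachable u0 v0 := by
    have hb := (SimpleGraph.isAcyclic_iff_forall_edge_isBridge.1 hM.IsAcyclic)
      (M.mem_edgeSet.mpr hdel)
    exact SimpleGraph.isBridge_iff.1 hb
  have key : N.Reachable u0 v0 := by
    rcases hall x with hxu | hxv <;> rcases hall y with hyu | hyv
    · exact absurd (hxu.trans hyu.symm) hsep
    · exact (hxu.mono hDN).symm.trans (hadjN.reachable.trans (hyv.mono hDN))
    · exact (hyu.mono hDN).symm.trans ((hadjN.symm.reachable).trans (hxv.mono hDN))
    · exact absurd (hxv.trans hyv.symm) hsep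
  constructor
  · have : Nonempty V := ⟨u0⟩
    refine SimpleGraph.Connected.mk ?_
    intro u v
    have h1 : N.Reachable u u0 :=
      (hall u).elim (·.mono hDN) (fun h => (h.mono hDN).trans key.symm)
    have h2 : N.Reachable v u0 :=
      (hall v).elim (·.mono hDN) (fun h => (h.mono hDN).trans key.symm)
    exact h1.trans h2.symm
  · intro v c hc
    by_cases he : s(x, y) ∈ c.edges
    · have hcyc : N.Adj x y ∧ (N \ SimpleGraph.fromEdgeSet {s(x, y)}).Reachable x y :=
        (SimpleGraph.adj_and_reachable_delete_edges_iff_exists_cycle).2 ⟨v, c, hc, he⟩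
      have hle : (N \ SimpleGraph.fromEdgeSet {s(x, y)}) ≤ D := by
        intro a b hab
        rw [SimpleGraph.sdiff_adj, hN, SimpleGraph.sup_adj] at hab
        rcases hab with ⟨h1 | h2, h3⟩
        · exact h1
        · exact absurd h2 h3
      exact hsep ((hcyc.2).mono hle)
    · have hsub : ∀ e ∈ c.edges, e ∈ M.edgeSet := by
        intro e heM
        have := c.edges_subset_edgeSet heM
        rw [hN, SimpleGraph.edgeSet_sup, hD, SimpleGraph.edgeSet_deleteEdges,
          SimpleGraph.edgeSet_fromEdgeSet] at this
        rcases this with h1 | h2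
        · exact h1.1
        · exact absurd (h2.1 ▸ heM : s(x, y) ∈ c.edges) he
      exact hM.IsAcyclic (c.transfer M hsub) (hc.transfer hsub)

end MSTaux


namespace MSTaux

lemma wsum_swap {V : Type*} [Finite V] (w : Sym2 V → ℝ) {M : SimpleGraph V} {f e : Sym2 V}
    (hf : f ∈ M.edgeSet) (he : e ∉ M.edgeSet) (hed : ¬ e.IsDiag) :
    wsum w ((M.deleteEdges {f}) ⊔ SimpleGraph.fromEdgeSet {e}) = wsum w M - w f + w e := by
  classical
  have hset : ((M.deleteEdges {f}) ⊔ SimpleGraph.fromEdgeSet {e}).edgeSet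
      = (M.edgeSet \ {f}) ∪ {e} := by
    rw [SimpleGraph.edgeSet_sup, SimpleGraph.edgeSet_deleteEdges,
      SimpleGraph.edgeSet_fromEdgeSet]
    congr 1
    ext g
    simp only [Set.mem_diff, Set.mem_singleton_iff, Set.mem_setOf_eq, and_iff_left_iff_imp]
    rintro rfl
    exact hed
  unfold wsum
  have h1 : (((M.deleteEdges {f}) ⊔ SimpleGraph.fromEdgeSet {e}).edgeSet).toFinite.toFinset
      = insert e (M.edgeSet.toFinite.toFinset.erase f) := by
    ext g
    simp only [Set.Finite.mem_toFinset, hset, Set.mem_union, Set.mem_diff,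
      Set.mem_singleton_iff, Finset.mem_insert, Finset.mem_erase]
    tauto
  rw [h1, Finset.sum_insert, Finset.sum_erase_eq_sub]
  · ring
  · simpa using hf
  · simp only [Finset.mem_erase, Set.Finite.mem_toFinset]
    rintro ⟨-, hmem⟩
    exact he hmem

lemma w_le_G {V : Type*} (G : SimpleGraph V) {x y : V} (hxy : G.Adj x y) :
    SimpleGraph.fromEdgeSet {s(x, y)} ≤ G := by
  have h := SimpleGraph.fromEdgeSet_mono (Set.singleton_subset_iff.mpr hxy : {s(x,y)} ⊆ G.edgeSet)
  rwa [SimpleGraph.fromEdgeSet_edgeSet] at h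

end MSTaux

open MSTaux in
/-- If `G*` is obtained from `G` by reducing weights only on the edges of a subtree `T`
(all weights remaining distinct), then `E(MST(G*)) ⊆ E(MST(G)) ∪ E(T)`. -/
theorem stmt7 {V : Type*} [Finite V] (G : SimpleGraph V) (w w' : Sym2 V → ℝ)
    (hG : G.Connected) (hd : DistinctWeights G w) (hd' : DistinctWeights G w')
    (T : SimpleGraph V) (hTG : T ≤ G) (hT : (T.induce T.support).IsTree)
    (hle : ∀ e ∈ T.edgeSet, w' e ≤ w e)
    (heq : ∀ e ∉ T.edgeSet, w' e = w e)
    (M M' : SimpleGraph V) (hM : IsMST G w M) (hM' : IsMST G w' M') :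
    M'.edgeSet ⊆ M.edgeSet ∪ T.edgeSet := by
  classical
  intro e he
  by_cases heT : e ∈ T.edgeSet
  · exact Set.mem_union_right _ heT
  by_contra hcon
  have heM : e ∉ M.edgeSet := fun h => hcon (Set.mem_union_left _ h)
  clear hcon
  revert he heT heM
  induction e using Sym2.ind with
  | _ a b =>
  intro he heT heM
  have hab : M'.Adj a b := he
  have hne : a ≠ b := hab.ne
  have habG : G.Adj a b := hM'.1 hab
  -- the cut
  set S : Set V := {v | (M'.deleteEdges {s(a, b)}).Reachable a v} with hS
  have haS : a ∈ S := Reachable.refl _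
  have hbS : b ∉ S := by
    have hb := (SimpleGraph.isAcyclic_iff_forall_edge_isBridge.1 hM'.2.1.IsAcyclic)
      (M'.mem_edgeSet.mpr hab)
    exact SimpleGraph.isBridge_iff.1 hb
  -- Claim A: the cut property for M'
  have claimA : ∀ x y : V, G.Adj x y → x ∈ S → y ∉ S → s(x, y) ≠ s(a, b) →
      w' s(a, b) < w' s(x, y) := by
    intro x y hxy hxS hyS hnef
    have hxyne : x ≠ y := hxy.ne
    have hfM' : s(x, y) ∉ M'.edgeSet := by
      intro hmem
      have hadj : (M'.deleteEdges {s(a, b)}).Adj x y := by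
        rw [SimpleGraph.deleteEdges_adj]
        exact ⟨M'.mem_edgeSet.mp hmem, by simpa using hnef⟩
      exact hyS (hxS.trans hadj.reachable)
    have hsep : ¬ (M'.deleteEdges {s(a, b)}).Reachable x y := fun h => hyS (hxS.trans h)
    have htree := swap_isTree hM'.2.1 hab hxyne hfM' hsep
    have hNle : (M'.deleteEdges {s(a, b)}) ⊔ SimpleGraph.fromEdgeSet {s(x, y)} ≤ G :=
      sup_le (le_trans (SimpleGraph.deleteEdges_le _) hM'.1) (w_le_G G hxy)
    have hcomp := hM'.2.2 _ hNle htree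
    rw [wsum_swap w' (M'.mem_edgeSet.mpr hab) hfM' (by simp [hxyne])] at hcomp
    have hle2 : w' s(a, b) ≤ w' s(x, y) := by linarith
    refine lt_of_le_of_ne hle2 (fun hw => hnef ?_)
    exact hd' _ (G.mem_edgeSet.mpr hxy) _ (G.mem_edgeSet.mpr habG) hw.symm
  -- a path in M from a to b
  have hreach : M.Reachable a b := hM.2.1.isConnected.preconnected a b
  set p := hreach.some.bypass with hp_def
  have hp : p.IsPath := SimpleGraph.Walk.bypass_isPath _
  obtain ⟨d, hd_mem, hd1, hd2⟩ := p.exists_boundary_dart S haS hbS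
  have hfM : s(d.fst, d.snd) ∈ M.edgeSet := M.mem_edgeSet.mpr d.adj
  have hfG : G.Adj d.fst d.snd := hM.1 d.adj
  have hfe : s(d.fst, d.snd) ≠ s(a, b) := fun h => heM (h ▸ hfM)
  have hwlt : w' s(a, b) < w' s(d.fst, d.snd) := claimA _ _ hfG hd1 hd2 hfe
  have hw1 : w s(a, b) = w' s(a, b) := (heq _ heT).symm
  have hw2 : w' s(d.fst, d.snd) ≤ w s(d.fst, d.snd) := by
    by_cases hfT : s(d.fst, d.snd) ∈ T.edgeSet
    · exact hle _ hfT
    · rw [heq _ hfT]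
  have hwlt2 : w s(a, b) < w s(d.fst, d.snd) := by linarith
  -- f is on the path p, so removing it disconnects a from b in M
  have hf_in : s(d.fst, d.snd) ∈ p.edges := by
    have : d.edge ∈ p.edges := List.mem_map_of_mem hd_mem
    exact this
  have hsep2 : ¬ (M.deleteEdges {s(d.fst, d.snd)}).Reachable a b :=
    not_reach_del hM.2.1.IsAcyclic hp hf_in
  have htree2 := swap_isTree hM.2.1 d.adj hne heM hsep2
  have hNle2 : (M.deleteEdges {s(d.fst, d.snd)}) ⊔ SimpleGraph.fromEdgeSet {s(a, b)} ≤ G :=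
    sup_le (le_trans (SimpleGraph.deleteEdges_le _) hM.1) (w_le_G G habG)
  have hcomp2 := hM.2.2 _ hNle2 htree2
  rw [wsum_swap w hfM heM (by simp [hne])] at hcomp2
  linarith
end

section
/- If P is a path contained in a tree T₂, and the edge set of T₂ is contained in E(T₁) ∪ E(T₀) for trees T₁ and T₀ (where T₀ is a tree on a subset of the vertices), then P decomposes uniquely into edge-disjoint consecutive subpaths P₀, P₁, ..., P_{2k}, alternating so that P_i ⊆ T₀ for odd i and P_i ⊆ T₁ for even i; moreover the odd-indexed subpaths are pairwise vertex-disjoint subpaths of T₀, so k ≤ |E(T₀)| and the total weight of the odd-indexed subpaths is at most the weight of T₀. -/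
open SimpleGraph

/-- `IsAltDecomp T0 T1 p L` says that the list of lists `L` is the decomposition of the
edge list of the path `p` into `2k+1` consecutive (edge-)blocks, alternating so that
odd-indexed blocks are nonempty and consist of edges of `T0`, while even-indexed blocks
consist of edges of `T1` which are not edges of `T0`; all blocks except possibly the
first and last are nonempty. (Blocks correspond to the subpaths `P₀,…,P_{2k}`; a single
vertex subpath corresponds to an empty block.) -/
def IsAltDecomp {V : Type*} (T0 T1 : SimpleGraph V) {T2 : SimpleGraph V} {u v : V}
    (p : T2.Walk u v) (L : List (List (Sym2 V))) : Prop :=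
  L.length % 2 = 1 ∧ p.edges = L.flatten ∧
  (∀ i < L.length,
    (i % 2 = 1 → L.getD i [] ≠ [] ∧ ∀ e ∈ L.getD i [], e ∈ T0.edgeSet) ∧
    (i % 2 = 0 → ∀ e ∈ L.getD i [], e ∈ T1.edgeSet ∧ e ∉ T0.edgeSet)) ∧
  (∀ i, i % 2 = 0 → 0 < i → i + 1 < L.length → L.getD i [] ≠ [])

section AltList'
open List

section AltList
variable {α : Type*} (b : α → Bool)

def AltProp (l : List α) (L : List (List α)) : Prop :=
  L.length % 2 = 1 ∧ l = L.flatten ∧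
  (∀ i < L.length,
    (i % 2 = 1 → L.getD i [] ≠ [] ∧ ∀ e ∈ L.getD i [], b e = true) ∧
    (i % 2 = 0 → ∀ e ∈ L.getD i [], b e = false)) ∧
  (∀ i, i % 2 = 0 → 0 < i → i + 1 < L.length → L.getD i [] ≠ [])

variable {b}

lemma takeWhile_append_all {p : α → Bool} {xs ys : List α} (h : ∀ x ∈ xs, p x = true) :
    takeWhile p (xs ++ ys) = xs ++ takeWhile p ys := by
  induction xs with
  | nil => simp
  | cons a l ih =>
    rw [cons_append, takeWhile_cons_of_pos (h a (by simp)), ih (fun x hx => h x (by simp [hx])),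
      cons_append]

lemma dropWhile_append_all {p : α → Bool} {xs ys : List α} (h : ∀ x ∈ xs, p x = true) :
    dropWhile p (xs ++ ys) = dropWhile p ys := by
  induction xs with
  | nil => simp
  | cons a l ih =>
    rw [cons_append, dropWhile_cons_of_pos (h a (by simp)), ih (fun x hx => h x (by simp [hx]))]

lemma takeWhile_eq_nil_of_head {p : α → Bool} {ys : List α}
    (h : ∀ hy : ys ≠ [], p (ys.head hy) = false) : takeWhile p ys = [] := by
  cases ys with
  | nil => rfl
  | cons a l =>
    have := h (cons_ne_nil a l)
    rw [head_cons] at this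
    exact takeWhile_cons_of_neg (by simp [this])

lemma dropWhile_eq_self_of_head {p : α → Bool} {ys : List α}
    (h : ∀ hy : ys ≠ [], p (ys.head hy) = false) : dropWhile p ys = ys := by
  cases ys with
  | nil => rfl
  | cons a l =>
    have := h (cons_ne_nil a l)
    rw [head_cons] at this
    exact dropWhile_cons_of_neg (by simp [this])

lemma length_dropWhile_le' (p : α → Bool) (l : List α) :
    (dropWhile p l).length ≤ l.length := by
  conv_rhs => rw [← takeWhile_append_dropWhile (p := p) (l := l)]
  rw [length_append]; omega

lemma takeWhile_ne_nil_of_head {p : α → Bool} {ys : List α} (hy : ys ≠ [])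
    (h : p (ys.head hy) = true) : takeWhile p ys ≠ [] := by
  cases ys with
  | nil => exact absurd rfl hy
  | cons a l =>
    rw [head_cons] at h
    rw [takeWhile_cons_of_pos h]; simp

lemma head_append_mem_left {l₁ l₂ : List α} (h : l₁ ≠ []) (w : l₁ ++ l₂ ≠ []) :
    (l₁ ++ l₂).head w ∈ l₁ := by
  rw [head_append, dif_neg (show ¬l₁.isEmpty = true by simpa using h)]
  exact head_mem h

lemma head_mem_left_of_eq {l l₁ l₂ : List α} (h : l = l₁ ++ l₂) (h1 : l₁ ≠ [])
    (w : l ≠ []) : l.head w ∈ l₁ := by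
  subst h; exact head_append_mem_left h1 w

/-- tail shift -/
lemma AltProp.shift {l : List α} {A C : List α} {rest : List (List α)}
    (h : AltProp b l (A :: C :: rest)) : AltProp b rest.flatten rest := by
  obtain ⟨h1, _h2, h3, h4⟩ := h
  simp only [length_cons] at h1
  refine ⟨by omega, rfl, ?_, ?_⟩
  · intro i hi
    have := h3 (i + 2) (by simp only [length_cons]; omega)
    simpa [Nat.add_mod_right] using this
  · intro i hi hpos hlt
    have := h4 (i + 2) (by omega) (by omega) (by simp only [length_cons]; omega)
    simpa using this

lemma altProp_shape {l : List α} {L : List (List α)} (h : AltProp b l L) :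
    (l.dropWhile (fun x => !b x) = [] → L = [l]) ∧
    (l.dropWhile (fun x => !b x) ≠ [] → ∃ rest,
      L = l.takeWhile (fun x => !b x) :: (l.dropWhile (fun x => !b x)).takeWhile b :: rest ∧
      AltProp b ((l.dropWhile (fun x => !b x)).dropWhile b) rest) := by
  obtain ⟨h1, h2, h3, h4⟩ := h
  match L with
  | [] => simp at h1
  | [A] =>
    have hA : l = A := by simpa using h2
    have hdrop : l.dropWhile (fun x => !b x) = [] := by
      rw [hA, dropWhile_eq_nil_iff]
      intro x hx
      have := (h3 0 (by simp)).2 rfl x (by simpa using hx)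
      simp [this]
    exact ⟨fun _ => by rw [hA], fun hne => absurd hdrop hne⟩
  | A :: C :: rest =>
    have hAf : ∀ x ∈ A, (!b x) = true := by
      intro x hx
      have := (h3 0 (by simp)).2 rfl x (by simpa using hx)
      simp [this]
    have hC := (h3 1 (by simp only [length_cons]; omega)).1 rfl
    rw [show (A :: C :: rest).getD 1 [] = C from rfl] at hC
    obtain ⟨hCne, hCt⟩ := hC
    have hm : ∀ hm' : rest.flatten ≠ [], b (rest.flatten.head hm') = false := by
      intro hm'
      match rest, hm' with
      | [], hm' => exact absurd rfl hm'
      | B :: rest₂, hm' =>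
        have hBf : ∀ x ∈ B, b x = false := by
          intro x hx
          have := (h3 2 (by simp only [length_cons]; omega)).2 rfl x (by simpa using hx)
          simpa using this
        have hBne : B ≠ [] := by
          match rest₂ with
          | [] => intro hc; apply hm'; simp [hc]
          | B' :: rest₃ =>
            have := h4 2 rfl (by omega) (by simp only [length_cons]; omega)
            simpa using this
        exact hBf _ (head_mem_left_of_eq (flatten_cons (l := B) (L := rest₂)) hBne hm')
    have hflat : l = A ++ (C ++ rest.flatten) := by simpa using h2
    have hheadC : ∀ hy : (C ++ rest.flatten) ≠ [], ((fun x => !b x) ((C ++ rest.flatten).head hy)) = false := by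
      intro hy
      simp [hCt _ (head_append_mem_left hCne hy)]
    have htake : l.takeWhile (fun x => !b x) = A := by
      rw [hflat, takeWhile_append_all hAf, takeWhile_eq_nil_of_head hheadC, append_nil]
    have hdrop : l.dropWhile (fun x => !b x) = C ++ rest.flatten := by
      rw [hflat, dropWhile_append_all hAf, dropWhile_eq_self_of_head hheadC]
    have hdropne : l.dropWhile (fun x => !b x) ≠ [] := by
      rw [hdrop]; intro hc
      exact hCne (append_eq_nil_iff.mp hc).1
    have htake2 : (l.dropWhile (fun x => !b x)).takeWhile b = C := by
      rw [hdrop, takeWhile_append_all hCt, takeWhile_eq_nil_of_head hm, append_nil]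
    have hdrop2 : (l.dropWhile (fun x => !b x)).dropWhile b = rest.flatten := by
      rw [hdrop, dropWhile_append_all hCt, dropWhile_eq_self_of_head hm]
    refine ⟨fun hc => absurd hc hdropne, fun _ => ⟨rest, ?_, ?_⟩⟩
    · rw [htake, htake2]
    · rw [hdrop2]
      exact AltProp.shift ⟨h1, h2, h3, h4⟩

lemma altProp_unique_aux : ∀ (n : ℕ) (l : List α) (L L' : List (List α)), l.length = n →
    AltProp b l L → AltProp b l L' → L = L' := by
  intro n
  induction n using Nat.strong_induction_on with
  | _ n ih =>
  intro l L L' hn h h'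
  by_cases hd : l.dropWhile (fun x => !b x) = []
  · rw [(altProp_shape h).1 hd, (altProp_shape h').1 hd]
  · obtain ⟨rest, hL, hrest⟩ := (altProp_shape h).2 hd
    obtain ⟨rest', hL', hrest'⟩ := (altProp_shape h').2 hd
    have hCne : (l.dropWhile (fun x => !b x)).takeWhile b ≠ [] :=
      takeWhile_ne_nil_of_head hd (by simpa using head_dropWhile_not (fun x => !b x) hd)
    have hlt : ((l.dropWhile (fun x => !b x)).dropWhile b).length < n := by
      have e1 : ((l.dropWhile (fun x => !b x)).takeWhile b).length
          + ((l.dropWhile (fun x => !b x)).dropWhile b).length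
          = (l.dropWhile (fun x => !b x)).length := by
        rw [← length_append, takeWhile_append_dropWhile]
      have e2 := length_dropWhile_le' (fun x => !b x) l
      have e3 : 0 < ((l.dropWhile (fun x => !b x)).takeWhile b).length :=
        length_pos_iff.mpr hCne
      omega
    rw [hL, hL', ih _ hlt _ _ _ rfl hrest hrest']

lemma altProp_unique {l : List α} {L L' : List (List α)}
    (h : AltProp b l L) (h' : AltProp b l L') : L = L' :=
  altProp_unique_aux l.length l L L' rfl h h'

lemma altProp_exists_aux : ∀ (n : ℕ) (l : List α), l.length = n → ∃ L, AltProp b l L := by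
  intro n
  induction n using Nat.strong_induction_on with
  | _ n ih =>
  intro l hn
  by_cases hd : l.dropWhile (fun x => !b x) = []
  · refine ⟨[l], by simp, by simp, ?_, by intro i _ _ h; simp only [length_singleton] at h; omega⟩
    intro i hi
    simp only [length_singleton] at hi
    interval_cases i
    refine ⟨by omega, fun _ e he => ?_⟩
    have := dropWhile_eq_nil_iff.mp hd e (by simpa using he)
    simpa using this
  · set r := l.dropWhile (fun x => !b x) with hr
    have hheadr : b (r.head hd) = true := by simpa using head_dropWhile_not (fun x => !b x) hd
    set C := r.takeWhile b with hCdef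
    set r' := r.dropWhile b with hr'def
    have hCne : C ≠ [] := takeWhile_ne_nil_of_head hd hheadr
    have hlt : r'.length < n := by
      have e1 : C.length + r'.length = r.length := by
        rw [hCdef, hr'def, ← length_append, takeWhile_append_dropWhile]
      have e2 : r.length ≤ l.length := hr ▸ length_dropWhile_le' (fun x => !b x) l
      have e3 : 0 < C.length := length_pos_iff.mpr hCne
      omega
    obtain ⟨L', g1, g2, g3, g4⟩ := ih _ hlt r' rfl
    refine ⟨l.takeWhile (fun x => !b x) :: C :: L', by simp only [length_cons]; omega, ?_, ?_, ?_⟩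
    · have : l = l.takeWhile (fun x => !b x) ++ (C ++ r') := by
        rw [hCdef, hr'def, takeWhile_append_dropWhile, takeWhile_append_dropWhile]
      rw [g2] at this
      simpa using this
    · intro i hi
      match i with
      | 0 =>
        refine ⟨by omega, fun _ e he => ?_⟩
        have := mem_takeWhile_imp (p := fun x => !b x) (by simpa using he)
        simpa using this
      | 1 =>
        refine ⟨fun _ => ⟨by simpa using hCne, fun e he => ?_⟩, by omega⟩
        exact mem_takeWhile_imp (by simpa using he)
      | (j + 2) =>
        have := g3 j (by simp only [length_cons] at hi; omega)
        simpa [Nat.add_mod_right] using this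
    · intro i hie hipos hilt
      match i, hie, hipos with
      | (j + 2), hie, _ =>
        match j, hie with
        | 0, _ =>
          have hlen : 2 ≤ L'.length := by simp only [length_cons] at hilt; omega
          intro hc
          simp only [getD_cons_succ] at hc
          match L', hc, hlen, g2, g3 with
          | [] :: B1 :: rest₃, _, _, g2, g3 =>
            have hB1 := (g3 1 (by simp only [length_cons]; omega)).1 rfl
            rw [show (([] : List α) :: B1 :: rest₃).getD 1 [] = B1 from rfl] at hB1
            obtain ⟨hB1ne, hB1t⟩ := hB1
            have hflat : r' = B1 ++ rest₃.flatten := by simpa using g2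
            have hr'ne : r' ≠ [] := by
              rw [hflat]; intro hcc
              exact hB1ne (append_eq_nil_iff.mp hcc).1
            have hhead : b (r'.head hr'ne) = false := head_dropWhile_not b hr'ne
            rw [hB1t _ (head_mem_left_of_eq hflat hB1ne hr'ne)] at hhead
            exact absurd hhead (by simp)
        | (j' + 2), hie' =>
          have := g4 (j' + 2) (by omega) (by omega) (by simp only [length_cons] at hilt; omega)
          simpa using this

lemma altProp_exists (l : List α) : ∃ L, AltProp b l L :=
  altProp_exists_aux l.length l rfl

end AltList

end AltList'

section
open List
section WalkLemmas
open List SimpleGraph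

lemma headD_mem' {α : Type*} {l : List α} (h : l ≠ []) (d : α) : l.headD d ∈ l := by
  cases l with
  | nil => exact absurd rfl h
  | cons a t => simp

lemma start_not_mem_far_edge {V : Type*} {G : SimpleGraph V} {u v : V} (q : G.Walk u v)
    (hq : q.IsPath) (m1 m3 : List (Sym2 V)) (h : q.edges = m1 ++ m3) (hm1 : m1 ≠ [])
    {f : Sym2 V} (hf : f ∈ m3) (hx : u ∈ f) : False := by
  cases q with
  | nil =>
    rw [Walk.edges_nil] at h
    exact hm1 (append_eq_nil_iff.mp h.symm).1
  | @cons _ w _ ha r =>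
    rw [Walk.edges_cons] at h
    cases m1 with
    | nil => exact hm1 rfl
    | cons e0 m1' =>
      rw [cons_append] at h
      injection h with h0 h'
      obtain ⟨hr, hur⟩ := (Walk.cons_isPath_iff ha r).mp hq
      obtain ⟨y, rfl⟩ := Sym2.mem_iff_exists.mp hx
      exact hur (r.fst_mem_support_of_mem_edges (by rw [h']; exact mem_append_right _ hf))

lemma path_far {V : Type*} {G : SimpleGraph V} {l2 l3 : List (Sym2 V)} {f : Sym2 V} {x : V}
    (hl2 : l2 ≠ []) (hf : f ∈ l3) (hxf : x ∈ f) :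
    ∀ {u v : V} (p : G.Walk u v), p.IsPath →
      ∀ (l1 : List (Sym2 V)) (e : Sym2 V), p.edges = l1 ++ l2 ++ l3 → e ∈ l1 → x ∈ e → False := by
  intro u v p
  induction p with
  | nil =>
    intro _ l1 e h he _
    rw [Walk.edges_nil] at h
    rw [(append_eq_nil_iff.mp ((append_eq_nil_iff.mp h.symm).1)).1] at he
    exact not_mem_nil he
  | @cons a c _ ha q ih =>
    intro hp l1 e h he hxe
    rw [Walk.edges_cons] at h
    obtain ⟨hq, hu⟩ := (Walk.cons_isPath_iff ha q).mp hp
    cases l1 with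
    | nil => exact not_mem_nil he
    | cons e0 l1' =>
      rw [append_assoc, cons_append] at h
      injection h with h0 h'
      rw [← append_assoc] at h'
      rcases mem_cons.mp he with rfl | he'
      · rw [← h0] at hxe
        rcases Sym2.mem_iff.mp hxe with rfl | rfl
        · obtain ⟨y, rfl⟩ := Sym2.mem_iff_exists.mp hxf
          exact hu (q.fst_mem_support_of_mem_edges
            (by rw [h', append_assoc]; exact mem_append_right _ (mem_append_right _ hf)))
        · exact start_not_mem_far_edge q hq (l1' ++ l2) l3 h'
            (fun hc => hl2 (append_eq_nil_iff.mp hc).2) hf hxf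
      · exact ih hq l1' e h' he' hxe

lemma flatten_split {α : Type*} (L : List (List α)) (i j : ℕ) (hij : i + 1 < j)
    (hj : j < L.length) :
    ∃ l1 l2 l3 : List α, L.flatten = l1 ++ l2 ++ l3 ∧
      (∀ x ∈ L.getD i [], x ∈ l1) ∧ (∀ x ∈ L.getD (i+1) [], x ∈ l2) ∧
      (∀ x ∈ L.getD j [], x ∈ l3) := by
  refine ⟨(L.take (i+1)).flatten, ((L.drop (i+1)).take (j - (i+1))).flatten,
    (L.drop j).flatten, ?_, ?_, ?_, ?_⟩
  · rw [append_assoc]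
    conv_lhs => rw [← take_append_drop (i+1) L]
    rw [flatten_append]
    congr 1
    conv_lhs => rw [← take_append_drop (j - (i+1)) (L.drop (i+1))]
    rw [flatten_append, drop_drop]
    congr 3
    omega
  · intro x hx
    rw [getD_eq_getElem L [] (by omega)] at hx
    refine mem_flatten.mpr ⟨L[i], ?_, hx⟩
    have h1 : i < (L.take (i+1)).length := by rw [length_take]; omega
    have : (L.take (i+1))[i] = L[i] := getElem_take
    exact this ▸ getElem_mem h1
  · intro x hx
    rw [getD_eq_getElem L [] (by omega)] at hx
    refine mem_flatten.mpr ⟨L[i+1], ?_, hx⟩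
    have h0 : 0 < ((L.drop (i+1)).take (j - (i+1))).length := by
      rw [length_take, length_drop]; omega
    have e1 : ((L.drop (i+1)).take (j - (i+1)))[0]'h0 = (L.drop (i+1))[0]'(by rw [length_drop]; omega) := getElem_take
    have e2 : (L.drop (i+1))[0]'(by rw [length_drop]; omega) = L[i+1+0] := getElem_drop
    rw [e2] at e1
    exact e1 ▸ getElem_mem h0
  · intro x hx
    rw [getD_eq_getElem L [] hj] at hx
    refine mem_flatten.mpr ⟨L[j], ?_, hx⟩
    have h0 : 0 < (L.drop j).length := by rw [length_drop]; omega
    have e2 : (L.drop j)[0]'h0 = L[j+0] := getElem_drop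
    simp only [Nat.add_zero] at e2
    exact e2 ▸ getElem_mem h0

end WalkLemmas

end

open List in
/-- A path `P` in a tree `T₂` whose edges lie in `E(T₁) ∪ E(T₀)` decomposes uniquely into
edge-disjoint consecutive subpaths `P₀,…,P_{2k}` alternating between `T₁` (even indices)
and `T₀` (odd indices); moreover the odd-indexed subpaths are pairwise vertex-disjoint
subpaths of `T₀`, so `k ≤ |E(T₀)|` and their total weight is at most the weight of `T₀`. -/
theorem stmt10 {V : Type*} [Finite V] (w : Sym2 V → ℝ) (hw : ∀ e, 0 ≤ w e)
    (T0 T1 T2 : SimpleGraph V)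
    (hT0 : (T0.induce T0.support).IsTree) (hT1 : T1.IsTree) (hT2 : T2.IsTree)
    (hsub : T2.edgeSet ⊆ T1.edgeSet ∪ T0.edgeSet)
    {u v : V} (p : T2.Walk u v) (hp : p.IsPath) :
    (∃! L : List (List (Sym2 V)), IsAltDecomp T0 T1 p L) ∧
    ∀ L : List (List (Sym2 V)), IsAltDecomp T0 T1 p L →
      (∀ i j, i < L.length → j < L.length → i % 2 = 1 → j % 2 = 1 → i ≠ j →
        ∀ e ∈ L.getD i [], ∀ f ∈ L.getD j [], ∀ x : V, ¬(x ∈ e ∧ x ∈ f)) ∧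
      L.length / 2 ≤ T0.edgeSet.ncard ∧
      (∑ i ∈ Finset.range L.length,
        if i % 2 = 1 then ((L.getD i []).map w).sum else 0) ≤ wsum w T0 := by
  classical
  set b : Sym2 V → Bool := fun e => decide (e ∈ T0.edgeSet) with hb
  have hblock : ∀ (L : List (List (Sym2 V))) i, i < L.length →
      ∀ e ∈ L.getD i [], e ∈ L.flatten := by
    intro L i hi e he
    rw [getD_eq_getElem L [] hi] at he
    exact mem_flatten.mpr ⟨L[i], getElem_mem hi, he⟩
  have hequiv : ∀ L, IsAltDecomp T0 T1 p L ↔ AltProp b p.edges L := by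
    intro L
    constructor
    · rintro ⟨h1, h2, h3, h4⟩
      refine ⟨h1, h2, ?_, h4⟩
      intro i hi
      obtain ⟨ho, heo⟩ := h3 i hi
      refine ⟨fun hodd => ?_, fun heven e he => ?_⟩
      · obtain ⟨hne, hall⟩ := ho hodd
        exact ⟨hne, fun e he => by simp [hb, hall e he]⟩
      · simp [hb, (heo heven e he).2]
    · rintro ⟨h1, h2, h3, h4⟩
      refine ⟨h1, h2, ?_, h4⟩
      intro i hi
      obtain ⟨ho, heo⟩ := h3 i hi
      refine ⟨fun hodd => ?_, fun heven e he => ?_⟩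
      · obtain ⟨hne, hall⟩ := ho hodd
        exact ⟨hne, fun e he => by simpa [hb] using hall e he⟩
      · have hnot : e ∉ T0.edgeSet := by simpa [hb] using heo heven e he
        have hmem : e ∈ p.edges := by
          rw [h2]; exact hblock L i hi e he
        exact ⟨Or.resolve_right (hsub (p.edges_subset_edgeSet hmem)) hnot, hnot⟩
  obtain ⟨L0, hL0⟩ := altProp_exists (b := b) p.edges
  refine ⟨⟨L0, (hequiv L0).mpr hL0, fun L' hL' => altProp_unique ((hequiv L').mp hL') hL0⟩, ?_⟩
  intro L hLd
  obtain ⟨h1, h2, h3, h4⟩ := hLd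
  -- Part A
  have aux : ∀ i j, i < j → j < L.length → i % 2 = 1 → j % 2 = 1 →
      ∀ e ∈ L.getD i [], ∀ f ∈ L.getD j [], ∀ x : V, ¬(x ∈ e ∧ x ∈ f) := by
    intro i j hij hj hio hjo e he f hf x hx
    obtain ⟨hxe, hxf⟩ := hx
    have hij2 : i + 1 < j := by omega
    obtain ⟨l1, l2, l3, hsplit, m1, m2, m3⟩ := flatten_split L i j hij2 hj
    have hbne := h4 (i+1) (by omega) (by omega) (by omega)
    obtain ⟨y, hy⟩ := (L.getD (i+1) []).exists_mem_of_ne_nil hbne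
    have hl2 : l2 ≠ [] := ne_nil_of_mem (m2 y hy)
    exact path_far hl2 (m3 f hf) hxf p hp l1 e (by rw [h2, hsplit]) (m1 e he) hxe
  have partA : ∀ i j, i < L.length → j < L.length → i % 2 = 1 → j % 2 = 1 → i ≠ j →
      ∀ e ∈ L.getD i [], ∀ f ∈ L.getD j [], ∀ x : V, ¬(x ∈ e ∧ x ∈ f) := by
    intro i j hi hj hio hjo hne e he f hf x hx
    rcases lt_or_gt_of_ne hne with h | h
    · exact aux i j h hj hio hjo e he f hf x hx
    · exact aux j i h hi hjo hio f hf e he x ⟨hx.2, hx.1⟩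
  refine ⟨partA, ?_, ?_⟩
  -- Part B
  · rw [Set.ncard_eq_toFinset_card T0.edgeSet T0.edgeSet.toFinite]
    have hmemblk : ∀ a, a ∈ Finset.range (L.length / 2) →
        (L.getD (2*a+1) []).headD s(u, u) ∈ L.getD (2*a+1) [] ∧ 2*a+1 < L.length := by
      intro a ha
      rw [Finset.mem_range] at ha
      have hlt : 2*a+1 < L.length := by omega
      exact ⟨headD_mem' ((h3 _ hlt).1 (by omega)).1 _, hlt⟩
    have hcard := Finset.card_le_card_of_injOn
      (s := Finset.range (L.length / 2)) (t := T0.edgeSet.toFinite.toFinset)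
      (fun a => (L.getD (2*a+1) []).headD s(u, u)) ?_ ?_
    · simpa using hcard
    · intro a ha
      obtain ⟨hmem, hlt⟩ := hmemblk a ha
      rw [Finset.mem_coe, Set.Finite.mem_toFinset]
      exact ((h3 _ hlt).1 (by omega)).2 _ hmem
    · intro a ha a' ha' heq
      by_contra hne
      simp only [Finset.coe_range, Set.mem_Iio] at ha ha'
      obtain ⟨hmem, hlt⟩ := hmemblk a (Finset.mem_range.mpr ha)
      obtain ⟨hmem', hlt'⟩ := hmemblk a' (Finset.mem_range.mpr ha')
      rw [show (L.getD (2*a+1) []).headD s(u,u) = (L.getD (2*a'+1) []).headD s(u,u) from heq] at hmem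
      set e := (L.getD (2*a'+1) []).headD s(u, u)
      exact partA (2*a+1) (2*a'+1) hlt hlt' (by omega) (by omega) (by omega)
        e hmem e hmem' e.out.1 ⟨Sym2.out_fst_mem e, Sym2.out_fst_mem e⟩
  -- Part C
  · have hflnodup : L.flatten.Nodup := h2 ▸ hp.isTrail.edges_nodup
    have hblocknodup : ∀ i, i < L.length → (L.getD i []).Nodup := by
      intro i hi
      rw [getD_eq_getElem L [] hi]
      exact (sublist_flatten_of_mem (getElem_mem hi)).nodup hflnodup
    set G : ℕ → Finset (Sym2 V) := fun i => if i % 2 = 1 then (L.getD i []).toFinset else ∅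
      with hG
    have step1 : (∑ i ∈ Finset.range L.length,
        if i % 2 = 1 then ((L.getD i []).map w).sum else 0)
        = ∑ i ∈ Finset.range L.length, ∑ e ∈ G i, w e := by
      refine Finset.sum_congr rfl fun i hi => ?_
      rw [Finset.mem_range] at hi
      by_cases hio : i % 2 = 1
      · rw [if_pos hio, hG]
        simp only [if_pos hio]
        rw [List.sum_toFinset w (hblocknodup i hi)]
      · rw [if_neg hio, hG]
        simp [hio]
    have hdisj : (↑(Finset.range L.length) : Set ℕ).PairwiseDisjoint G := by
      intro i hi j hj hne
      simp only [Finset.coe_range, Set.mem_Iio] at hi hj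
      by_cases hio : i % 2 = 1
      · by_cases hjo : j % 2 = 1
        · rw [Function.onFun, Finset.disjoint_left]
          intro e hei hej
          rw [hG] at hei hej
          simp only [if_pos hio, List.mem_toFinset] at hei
          simp only [if_pos hjo, List.mem_toFinset] at hej
          exact partA i j hi hj hio hjo hne e hei e hej e.out.1
            ⟨Sym2.out_fst_mem e, Sym2.out_fst_mem e⟩
        · rw [Function.onFun, hG]
          simp [hjo]
      · rw [Function.onFun, hG]
        simp [hio]
    rw [step1, ← Finset.sum_biUnion hdisj]
    have hsubT0 : (Finset.range L.length).biUnion G ⊆ T0.edgeSet.toFinite.toFinset := by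
      intro e he
      rw [Finset.mem_biUnion] at he
      obtain ⟨i, hi, hei⟩ := he
      rw [Finset.mem_range] at hi
      rw [hG] at hei
      by_cases hio : i % 2 = 1
      · simp only [if_pos hio, List.mem_toFinset] at hei
        rw [Set.Finite.mem_toFinset]
        exact ((h3 i hi).1 hio).2 e hei
      · simp [hio] at hei
    exact Finset.sum_le_sum_of_subset_of_nonneg hsubT0 (fun e _ _ => hw e)
end

section
/- For a random graph G(n,p) with n vertices where each edge appears independently with probability p ∈ [0,1], the probability that G(n,p) is not connected is at most exp(n·exp(−np/2)) − 1. -/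
open MeasureTheory
open scoped ENNReal

/-- The Erdős–Rényi measure: each potential edge of the complete graph on `Fin n` is
present independently with probability `p`. The random graph associated to
`ω : Sym2 (Fin n) → Bool` is `SimpleGraph.fromEdgeSet {e | ω e = true}`. -/
noncomputable def erdosRenyi (n : ℕ) (p : ℝ) (hp1 : p ≤ 1) :
    Measure (Sym2 (Fin n) → Bool) :=
  Measure.pi fun _ => (PMF.bernoulli (Real.toNNReal p) (Real.toNNReal_le_one.mpr hp1)).toMeasure


lemma cyl (n : ℕ) (p : ℝ) (hp0 : 0 ≤ p) (hp1 : p ≤ 1) (E : Finset (Sym2 (Fin n))) :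
    erdosRenyi n p hp1 {ω : Sym2 (Fin n) → Bool | ∀ e ∈ E, ω e = false}
      = ENNReal.ofReal (1 - p) ^ E.card := by
  have hs : {ω : Sym2 (Fin n) → Bool | ∀ e ∈ E, ω e = false}
      = Set.pi Set.univ (fun e => if e ∈ E then {false} else Set.univ) := by
    ext ω
    simp only [Set.mem_setOf_eq, Set.mem_pi, Set.mem_univ, forall_true_left]
    constructor
    · intro h e
      by_cases he : e ∈ E <;> simp [he, h e]
    · intro h e he
      have := h e
      simpa [he] using this
  rw [erdosRenyi, hs, Measure.pi_pi]
  have hb : ∀ e : Sym2 (Fin n),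
      (PMF.bernoulli (Real.toNNReal p) (Real.toNNReal_le_one.mpr hp1)).toMeasure
        (if e ∈ E then ({false} : Set Bool) else Set.univ)
      = if e ∈ E then ENNReal.ofReal (1 - p) else 1 := by
    intro e
    by_cases he : e ∈ E
    · simp only [he, if_true]
      rw [PMF.toMeasure_apply_singleton _ _ (measurableSet_singleton _)]
      rw [PMF.bernoulli_apply]
      simp only [Bool.cond_false]
      rw [ENNReal.ofReal_sub _ hp0, ENNReal.ofReal_one, ENNReal.coe_sub, ENNReal.coe_one]
      rfl
    · simp only [he, if_false]
      exact measure_univ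
  simp only [hb]
  rw [Finset.prod_ite_mem Finset.univ E (fun _ => ENNReal.ofReal (1 - p))]
  simp [Finset.prod_const]

def cross {n : ℕ} (S : Finset (Fin n)) : Finset (Sym2 (Fin n)) :=
  (S ×ˢ Sᶜ).image (fun q => s(q.1, q.2))

lemma cross_card {n : ℕ} (S : Finset (Fin n)) : (cross S).card = S.card * (n - S.card) := by
  rw [cross, Finset.card_image_of_injOn, Finset.card_product, Finset.card_compl,
    Fintype.card_fin]
  intro a ha b hb hab
  simp only [Finset.mem_coe, Finset.mem_product, Finset.mem_compl] at ha hb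
  rcases Sym2.eq_iff.mp hab with ⟨h1, h2⟩ | ⟨h1, h2⟩
  · exact Prod.ext h1 h2
  · exact absurd ha.1 (h1 ▸ hb.2)


open Classical in
lemma exists_cut {n : ℕ} (hn : 1 ≤ n) (G : SimpleGraph (Fin n))
    (hG : ¬ G.Connected) :
    ∃ S : Finset (Fin n), S.Nonempty ∧ 2 * S.card ≤ n ∧
      ∀ a ∈ S, ∀ b ∉ S, ¬ G.Adj a b := by
  have : NeZero n := ⟨by omega⟩
  set v0 : Fin n := 0
  set T : Finset (Fin n) := Finset.univ.filter (fun a => G.Reachable v0 a) with hT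
  have hv0 : v0 ∈ T := by simp only [hT, Finset.mem_filter, Finset.mem_univ, true_and]; exact SimpleGraph.Reachable.refl v0
  have hTne : T.Nonempty := ⟨v0, hv0⟩
  have hclosed : ∀ a ∈ T, ∀ b ∉ T, ¬ G.Adj a b := by
    intro a ha b hb hadj
    simp only [hT, Finset.mem_filter, Finset.mem_univ, true_and] at ha hb
    exact hb (ha.trans hadj.reachable)
  have hTcne : Tᶜ.Nonempty := by
    rw [← Finset.card_pos, Finset.card_compl, Fintype.card_fin]
    by_contra h
    have hTuniv : T.card = n := by
      have := (Finset.card_le_univ T); simp only [Fintype.card_fin] at this; omega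
    have : T = Finset.univ := Finset.eq_univ_of_card T (by simp [hTuniv])
    apply hG
    rw [SimpleGraph.connected_iff]
    refine ⟨?_, ⟨v0⟩⟩
    intro u v
    have hu : u ∈ T := this ▸ Finset.mem_univ u
    have hv : v ∈ T := this ▸ Finset.mem_univ v
    simp only [hT, Finset.mem_filter, Finset.mem_univ, true_and] at hu hv
    exact hu.symm.trans hv
  by_cases hc : 2 * T.card ≤ n
  · exact ⟨T, hTne, hc, hclosed⟩
  · refine ⟨Tᶜ, hTcne, ?_, ?_⟩
    · rw [Finset.card_compl, Fintype.card_fin]; omega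
    · intro a ha b hb hadj
      rw [Finset.mem_compl, not_not] at *
      exact hclosed b (by simpa using hb) a (by simpa using ha) hadj.symm


lemma arith (n : ℕ) (hn : 1 ≤ n) (p : ℝ) (hp0 : 0 ≤ p) (hp1 : p ≤ 1) :
    ∑ k ∈ Finset.Icc 1 (n / 2), (n.choose k : ℝ) * (1 - p) ^ (k * (n - k))
      ≤ Real.exp (n * Real.exp (-(n * p) / 2)) - 1 := by
  set x : ℝ := n * Real.exp (-(n * p) / 2) with hx
  have hx0 : 0 ≤ x := mul_nonneg (Nat.cast_nonneg n) (Real.exp_pos _).le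
  have hterm : ∀ k ∈ Finset.Icc 1 (n / 2),
      (n.choose k : ℝ) * (1 - p) ^ (k * (n - k)) ≤ x ^ k / k.factorial := by
    intro k hk
    rw [Finset.mem_Icc] at hk
    have hkn : k ≤ n := le_trans hk.2 (Nat.div_le_self n 2)
    have h2k : 2 * k ≤ n := by omega
    have h1p : (0:ℝ) ≤ 1 - p := by linarith
    have step1 : (1 - p) ^ (k * (n - k)) ≤ Real.exp (-(n * p) / 2) ^ k := by
      have e1 : (1 - p) ^ (k * (n - k)) ≤ Real.exp (-p) ^ (k * (n - k)) := by
        apply pow_le_pow_left₀ h1p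
        linarith [Real.add_one_le_exp (-p)]
      refine e1.trans ?_
      rw [← Real.exp_nat_mul, ← Real.exp_nat_mul]
      apply Real.exp_le_exp.mpr
      have hc : ((k * (n - k) : ℕ) : ℝ) = (k : ℝ) * ((n : ℝ) - k) := by
        push_cast [Nat.cast_sub hkn]; ring
      rw [hc]
      have hnk : (n : ℝ) / 2 ≤ (n : ℝ) - k := by
        have : (2 * k : ℝ) ≤ n := by exact_mod_cast h2k
        linarith
      have hk0 : (0:ℝ) ≤ k := Nat.cast_nonneg k
      have hmono : p * (k * ((n:ℝ)/2)) ≤ p * (k * ((n:ℝ) - k)) :=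
        mul_le_mul_of_nonneg_left (mul_le_mul_of_nonneg_left hnk hk0) hp0
      nlinarith [hmono]
    have step2 : (n.choose k : ℝ) ≤ (n:ℝ) ^ k / k.factorial :=
      Nat.choose_le_pow_div k n
    calc (n.choose k : ℝ) * (1 - p) ^ (k * (n - k))
        ≤ ((n:ℝ) ^ k / k.factorial) * Real.exp (-(n * p) / 2) ^ k := by
          apply mul_le_mul step2 step1 (pow_nonneg h1p _)
          positivity
      _ = x ^ k / k.factorial := by rw [hx, mul_pow]; ring
  refine (Finset.sum_le_sum hterm).trans ?_
  have key : 1 + ∑ k ∈ Finset.Icc 1 (n / 2), x ^ k / k.factorial ≤ Real.exp x := by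
    have := Real.sum_le_exp_of_nonneg hx0 (n / 2 + 1)
    rw [Finset.range_eq_Ico, Finset.sum_eq_sum_Ico_succ_bot (Nat.succ_pos _)] at this
    simpa [Finset.Ico_add_one_right_eq_Icc] using this
  linarith

/-- The probability that `G(n,p)` is not connected is at most `exp(n·exp(−np/2)) − 1`. -/
theorem stmt11 (n : ℕ) (hn : 1 ≤ n) (p : ℝ) (hp0 : 0 ≤ p) (hp1 : p ≤ 1) :
    erdosRenyi n p hp1
        {ω : Sym2 (Fin n) → Bool | ¬ (SimpleGraph.fromEdgeSet {e | ω e = true}).Connected}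
      ≤ ENNReal.ofReal (Real.exp (n * Real.exp (-(n * p) / 2)) - 1) := by
  classical
  set μ := erdosRenyi n p hp1
  set 𝒮 : Finset (Finset (Fin n)) :=
    Finset.univ.filter (fun S => S.Nonempty ∧ 2 * S.card ≤ n) with h𝒮
  -- inclusion into the union of cut events
  have hsub : {ω : Sym2 (Fin n) → Bool |
        ¬ (SimpleGraph.fromEdgeSet {e | ω e = true}).Connected}
      ⊆ ⋃ S ∈ 𝒮, {ω : Sym2 (Fin n) → Bool | ∀ e ∈ cross S, ω e = false} := by
    intro ω hω
    obtain ⟨S, hS1, hS2, hS3⟩ := exists_cut hn _ hω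
    refine Set.mem_iUnion₂.mpr ⟨S, by simp [h𝒮, hS1, hS2], ?_⟩
    · intro e he
      simp only [cross, Finset.mem_image, Finset.mem_product, Finset.mem_compl] at he
      obtain ⟨⟨a, b⟩, ⟨ha, hb⟩, rfl⟩ := he
      by_contra htrue
      have hab : a ≠ b := fun h => hb (h ▸ ha)
      have : (SimpleGraph.fromEdgeSet {e | ω e = true}).Adj a b := by
        rw [SimpleGraph.fromEdgeSet_adj]
        exact ⟨by simpa using Bool.not_eq_false _ |>.mp htrue, hab⟩
      exact hS3 a ha b hb this
  have hub : μ {ω : Sym2 (Fin n) → Bool |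
        ¬ (SimpleGraph.fromEdgeSet {e | ω e = true}).Connected}
      ≤ ∑ S ∈ 𝒮, ENNReal.ofReal (1 - p) ^ (S.card * (n - S.card)) := by
    refine (measure_mono hsub).trans ?_
    refine (measure_biUnion_finset_le _ _).trans ?_
    refine Finset.sum_le_sum fun S _ => ?_
    rw [← cross_card S]
    exact le_of_eq (cyl n p hp0 hp1 (cross S))
  refine hub.trans ?_
  -- regroup by cardinality
  have hdecomp : 𝒮 = (Finset.Icc 1 (n / 2)).biUnion
      (fun k => Finset.powersetCard k Finset.univ) := by
    ext S
    simp only [h𝒮, Finset.mem_filter, Finset.mem_univ, true_and, Finset.mem_biUnion,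
      Finset.mem_Icc, Finset.mem_powersetCard_univ]
    constructor
    · rintro ⟨h1, h2⟩
      exact ⟨S.card, ⟨Finset.card_pos.mpr h1, Nat.le_div_iff_mul_le (by norm_num) |>.mpr
        (by omega)⟩, rfl⟩
    · rintro ⟨k, ⟨hk1, hk2⟩, rfl⟩
      refine ⟨Finset.card_pos.mp hk1, ?_⟩
      have := Nat.le_div_iff_mul_le (k := 2) (by norm_num) |>.mp hk2
      omega
  rw [hdecomp, Finset.sum_biUnion]
  · have hsum : ∀ k ∈ Finset.Icc 1 (n / 2),
        ∑ S ∈ Finset.powersetCard k (Finset.univ : Finset (Fin n)),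
          ENNReal.ofReal (1 - p) ^ (S.card * (n - S.card))
        = (n.choose k : ℝ≥0∞) * ENNReal.ofReal (1 - p) ^ (k * (n - k)) := by
      intro k _
      rw [Finset.sum_congr rfl (fun S hS => by
        rw [(Finset.mem_powersetCard_univ.mp hS : S.card = k)]),
        Finset.sum_const, Finset.card_powersetCard, Finset.card_univ, Fintype.card_fin,
        nsmul_eq_mul]
    rw [Finset.sum_congr rfl hsum]
    have h1p : (0:ℝ) ≤ 1 - p := by linarith
    have hterm : ∀ k ∈ Finset.Icc 1 (n / 2),
        (n.choose k : ℝ≥0∞) * ENNReal.ofReal (1 - p) ^ (k * (n - k))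
        = ENNReal.ofReal ((n.choose k : ℝ) * (1 - p) ^ (k * (n - k))) := by
      intro k _
      rw [ENNReal.ofReal_mul (Nat.cast_nonneg _), ENNReal.ofReal_natCast,
        ENNReal.ofReal_pow h1p]
    rw [Finset.sum_congr rfl hterm, ← ENNReal.ofReal_sum_of_nonneg]
    · exact ENNReal.ofReal_le_ofReal (arith n hn p hp0 hp1)
    · intro k _
      positivity
  · intro a _ b _ hab
    simp only [Function.onFun]
    rw [Finset.disjoint_left]
    intro S hSa hSb
    rw [Finset.mem_powersetCard_univ] at hSa hSb
    exact hab (hSa ▸ hSb)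
end
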